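/- arXiv:1804.05731 — 8 statements merged into one kernel-verified Lean document; each statement's English description precedes it below -/
import Mathlib

section
/- For all integers d ≥ 2, k ≥ 3, and all positive reals x_1, ..., x_d with x_1 + ... + x_d = 1, the inequality ∑_{1≤i<j≤d} (x_i·x_j^{k-1} + x_j·x_i^{k-1}) ≤ (1/k)·(1 - ∑_{i=1}^d x_i^k) holds. -/
theorem caterpillar_sum_ineq (d k : ℕ) (hd : 2 ≤ d) (hk : 3 ≤ k)
    (x : Fin d → ℝ) (hx : ∀ i, 0 < x i) (hsum : ∑ i, x i = 1) :
    ∑ p ∈ Finset.univ.filter (fun p : Fin d × Fin d => p.1 < p.2),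
        (x p.1 * x p.2 ^ (k - 1) + x p.2 * x p.1 ^ (k - 1))
      ≤ (1 / (k : ℝ)) * (1 - ∑ i, x i ^ k) := by
  have hx0 : ∀ i, (0:ℝ) ≤ x i := fun i => (hx i).le
  have hx1 : ∀ i, x i ≤ 1 := by
    intro i
    rw [← hsum]
    exact Finset.single_le_sum (fun j _ => hx0 j) (Finset.mem_univ i)
  set S : ℕ → ℝ := fun n => ∑ i, x i ^ n with hS
  -- pointwise monotone difference
  have hdiff : ∀ n : ℕ, S (n+2) - S (n+3) ≤ S (n+1) - S (n+2) := by
    intro n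
    have h : ∀ i ∈ Finset.univ, x i ^ (n+2) - x i ^ (n+3) ≤ x i ^ (n+1) - x i ^ (n+2) := by
      intro i _
      have h0 := hx0 i; have h1 := hx1 i
      have e2 : x i ^ (n+2) = x i ^ (n+1) * x i := by ring
      have e3 : x i ^ (n+3) = x i ^ (n+1) * x i * x i := by ring
      nlinarith [mul_nonneg (pow_nonneg h0 (n+1)) (sq_nonneg (1 - x i))]
    have := Finset.sum_le_sum h
    rw [Finset.sum_sub_distrib, Finset.sum_sub_distrib] at this
    exact this
  -- base case k = 3
  have b3 : 3 * (S 2 - S 3) ≤ 1 - S 3 := by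
    have hsq : ∀ i, S 2 - x i ^ 2 ≤ (1 - x i) ^ 2 := by
      intro i
      have h1 : ∑ j ∈ Finset.univ.erase i, x j ^ 2 = S 2 - x i ^ 2 := by
        rw [hS]
        exact Finset.sum_erase_eq_sub (Finset.mem_univ i)
      have h2 : ∑ j ∈ Finset.univ.erase i, x j = 1 - x i := by
        rw [Finset.sum_erase_eq_sub (Finset.mem_univ i), hsum]
      calc S 2 - x i ^ 2 = ∑ j ∈ Finset.univ.erase i, x j ^ 2 := h1.symm
        _ ≤ (∑ j ∈ Finset.univ.erase i, x j) ^ 2 :=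
            Finset.sum_sq_le_sq_sum_of_nonneg (fun j _ => hx0 j)
        _ = (1 - x i) ^ 2 := by rw [h2]
    have hmul : ∑ i, x i * (S 2 - x i ^ 2) ≤ ∑ i, x i * (1 - x i) ^ 2 :=
      Finset.sum_le_sum (fun i _ => mul_le_mul_of_nonneg_left (hsq i) (hx0 i))
    have eL : ∑ i, x i * (S 2 - x i ^ 2) = S 2 - S 3 := by
      have : ∀ i ∈ Finset.univ, x i * (S 2 - x i ^ 2) = x i * S 2 - x i ^ 3 := by
        intro i _; ring
      rw [Finset.sum_congr rfl this, Finset.sum_sub_distrib, ← Finset.sum_mul, hsum, one_mul]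
    have eR : ∑ i, x i * (1 - x i) ^ 2 = 1 - 2 * S 2 + S 3 := by
      have : ∀ i ∈ Finset.univ, x i * (1 - x i) ^ 2 = x i - 2 * x i ^ 2 + x i ^ 3 := by
        intro i _; ring
      rw [Finset.sum_congr rfl this]
      rw [Finset.sum_add_distrib, Finset.sum_sub_distrib, hsum, ← Finset.mul_sum]
    rw [eL, eR] at hmul
    linarith
  -- main claim by induction
  have main : ∀ n : ℕ, ((n:ℝ) + 3) * (S (n+2) - S (n+3)) ≤ 1 - S (n+3) := by
    intro n
    induction n with
    | zero => simpa using b3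
    | succ n ih =>
        have hd1 := hdiff (n+1)
        have hpos : (0:ℝ) ≤ (n:ℝ) + 3 := by positivity
        have hmul : ((n:ℝ) + 3) * (S (n+3) - S (n+4)) ≤ ((n:ℝ) + 3) * (S (n+2) - S (n+3)) :=
          mul_le_mul_of_nonneg_left hd1 hpos
        push_cast
        have : S (n+1+2) = S (n+3) := by norm_num
        rw [this]
        have : S (n+1+3) = S (n+4) := by norm_num
        rw [this]
        linarith
  -- rewrite k = n + 3
  obtain ⟨n, rfl⟩ : ∃ n, k = n + 3 := ⟨k - 3, by omega⟩
  have hk1 : n + 3 - 1 = n + 2 := by omega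
  rw [hk1]
  -- conversion of LHS
  have hswap : ∑ p ∈ Finset.univ.filter (fun p : Fin d × Fin d => p.1 < p.2),
      x p.2 * x p.1 ^ (n+2)
      = ∑ p ∈ Finset.univ.filter (fun p : Fin d × Fin d => p.2 < p.1),
      x p.1 * x p.2 ^ (n+2) := by
    apply Finset.sum_nbij' (fun p => p.swap) (fun p => p.swap) <;>
      simp [Prod.swap]
  have hsplit : ∑ p ∈ Finset.univ.filter (fun p : Fin d × Fin d => p.1 < p.2),
        (x p.1 * x p.2 ^ (n+2) + x p.2 * x p.1 ^ (n+2))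
      = ∑ p ∈ Finset.univ.filter (fun p : Fin d × Fin d => p.1 ≠ p.2),
        x p.1 * x p.2 ^ (n+2) := by
    rw [Finset.sum_add_distrib, hswap]
    have hunion : Finset.univ.filter (fun p : Fin d × Fin d => p.1 ≠ p.2)
        = Finset.univ.filter (fun p : Fin d × Fin d => p.1 < p.2)
          ∪ Finset.univ.filter (fun p : Fin d × Fin d => p.2 < p.1) := by
      ext p
      simp only [Finset.mem_filter, Finset.mem_union, Finset.mem_univ, true_and]
      constructor
      · intro h; exact (lt_or_gt_of_ne h).imp id id
      · rintro (h | h)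
        · exact ne_of_lt h
        · exact (ne_of_lt h).symm
    have hdisj : Disjoint (Finset.univ.filter (fun p : Fin d × Fin d => p.1 < p.2))
        (Finset.univ.filter (fun p : Fin d × Fin d => p.2 < p.1)) := by
      rw [Finset.disjoint_filter]
      intro p _ h1 h2
      exact absurd h1 (not_lt_of_gt h2)
    rw [hunion, Finset.sum_union hdisj]
  have hne : ∑ p ∈ Finset.univ.filter (fun p : Fin d × Fin d => p.1 ≠ p.2),
      x p.1 * x p.2 ^ (n+2) = S (n+2) - S (n+3) := by
    have htot : ∑ p ∈ (Finset.univ : Finset (Fin d × Fin d)), x p.1 * x p.2 ^ (n+2)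
        = S (n+2) := by
      rw [← Finset.univ_product_univ, Finset.sum_product]
      have hrow : ∀ i ∈ Finset.univ, (∑ j, x (i, j).1 * x (i, j).2 ^ (n+2)) = x i * S (n+2) := by
        intro i _
        rw [hS, Finset.mul_sum]
      rw [Finset.sum_congr rfl hrow, ← Finset.sum_mul, hsum, one_mul]
    have hdg : ∑ p ∈ Finset.univ.filter (fun p : Fin d × Fin d => p.1 = p.2),
        x p.1 * x p.2 ^ (n+2) = S (n+3) := by
      rw [hS]
      apply Finset.sum_nbij' (fun p : Fin d × Fin d => p.1) (fun i => (i, i)) <;>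
        simp +contextual [pow_succ, mul_comm]
    have := Finset.sum_filter_add_sum_filter_not (Finset.univ : Finset (Fin d × Fin d))
      (fun p : Fin d × Fin d => p.1 = p.2) (fun p => x p.1 * x p.2 ^ (n+2))
    rw [htot, hdg] at this
    have heq : Finset.univ.filter (fun p : Fin d × Fin d => ¬ p.1 = p.2)
        = Finset.univ.filter (fun p : Fin d × Fin d => p.1 ≠ p.2) := rfl
    rw [heq] at this
    linarith
  rw [hsplit, hne]
  -- conclude
  have hmain := main n
  have hpos : (0:ℝ) < (n:ℝ) + 3 := by positivity
  have hcast : ((n + 3 : ℕ) : ℝ) = (n:ℝ) + 3 := by push_cast; ring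
  have hSk : (∑ i, x i ^ (n+3)) = S (n+3) := rfl
  rw [hSk, hcast]
  rw [mul_comm, mul_one_div, le_div_iff₀ hpos]
  linarith
end

section
/- For all integers d ≥ 2 and k ≥ 3, the supremum of F_{d,k}(x_1,...,x_d) = (∑_{1≤i<j≤d} (x_i·x_j^{k-1} + x_j·x_i^{k-1})) / (1 - ∑_{i=1}^d x_i^k) over all positive reals x_1,...,x_d with x_1+...+x_d = 1 equals 1/k. -/
open Finset Filter Topology

private lemma sum_pairs {d : ℕ} (f : Fin d → Fin d → ℝ) :
    ∑ p ∈ Finset.univ.filter (fun p : Fin d × Fin d => p.1 < p.2), (f p.1 p.2 + f p.2 p.1)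
      = (∑ i, ∑ j, f i j) - ∑ i, f i i := by
  have h1 : (∑ i, ∑ j, f i j) = ∑ p ∈ (Finset.univ : Finset (Fin d × Fin d)), f p.1 p.2 := by
    rw [← Finset.univ_product_univ, Finset.sum_product]
  have h2 := Finset.sum_filter_add_sum_filter_not (Finset.univ : Finset (Fin d × Fin d))
    (fun p => p.1 < p.2) (fun p => f p.1 p.2)
  have hsplit : Finset.univ.filter (fun p : Fin d × Fin d => ¬ p.1 < p.2)
      = Finset.univ.filter (fun p : Fin d × Fin d => p.2 < p.1) ∪
        Finset.univ.filter (fun p : Fin d × Fin d => p.1 = p.2) := by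
    ext p
    simp only [Finset.mem_filter, Finset.mem_univ, true_and, Finset.mem_union, not_lt]
    constructor
    · intro h; rcases lt_or_eq_of_le h with h' | h'
      · exact Or.inl h'
      · exact Or.inr h'.symm
    · rintro (h | h)
      · exact h.le
      · exact h.ge
  have hdisj : Disjoint (Finset.univ.filter (fun p : Fin d × Fin d => p.2 < p.1))
      (Finset.univ.filter (fun p : Fin d × Fin d => p.1 = p.2)) := by
    rw [Finset.disjoint_filter]
    intro p _ h h'
    exact absurd h' h.ne'
  have h3 : ∑ p ∈ Finset.univ.filter (fun p : Fin d × Fin d => p.2 < p.1), f p.1 p.2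
      = ∑ p ∈ Finset.univ.filter (fun p : Fin d × Fin d => p.1 < p.2), f p.2 p.1 := by
    apply Finset.sum_nbij' (i := Prod.swap) (j := Prod.swap) <;>
      simp [Finset.mem_filter]
  have h4 : ∑ p ∈ Finset.univ.filter (fun p : Fin d × Fin d => p.1 = p.2), f p.1 p.2
      = ∑ i, f i i := by
    apply Finset.sum_nbij' (i := fun p => p.1) (j := fun i => (i, i)) <;>
      simp (config := { contextual := true }) [Finset.mem_filter, eq_comm]
  rw [h1, ← h2, hsplit, Finset.sum_union hdisj, h3, h4, Finset.sum_add_distrib]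
  ring

private lemma geom_lb {k : ℕ} (hk : 3 ≤ k) {a : ℝ} (ha : 0 ≤ a) (ha1 : a ≤ 1) :
    1 + ((k : ℝ) - 2) * a ^ (k - 2) ≤ ∑ t ∈ Finset.range (k - 1), a ^ t := by
  have hk1 : k - 1 = (k - 2) + 1 := by omega
  rw [hk1, Finset.sum_range_succ']
  simp only [pow_zero]
  have h1 : (Finset.range (k - 2)).card • (a ^ (k - 2)) ≤ ∑ t ∈ Finset.range (k - 2), a ^ (t + 1) := by
    apply Finset.card_nsmul_le_sum
    intro t ht
    exact pow_le_pow_of_le_one ha ha1 (by simp at ht; omega)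
  rw [Finset.card_range, nsmul_eq_mul] at h1
  have hc : ((k - 2 : ℕ) : ℝ) = (k : ℝ) - 2 := by
    have : (2 : ℕ) ≤ k := by omega
    push_cast [Nat.cast_sub this]; ring
  rw [hc] at h1
  linarith

private lemma pair_ineq {k : ℕ} (hk : 3 ≤ k) {a b : ℝ} (ha : 0 < a) (ha1 : a < 1)
    (hb : 0 < b) (hb1 : b < 1) (hab : a + b ≤ 1) :
    (a * b ^ (k - 1) + b * a ^ (k - 1)) * k ≤
      a * b * (∑ t ∈ Finset.range (k - 1), a ^ t) + b * a * (∑ t ∈ Finset.range (k - 1), b ^ t) := by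
  have hGa := geom_lb hk ha.le ha1.le
  have hGb := geom_lb hk hb.le hb1.le
  have hua : a ^ (k - 2) ≤ a := pow_le_of_le_one ha.le ha1.le (by omega)
  have hub : b ^ (k - 2) ≤ b := pow_le_of_le_one hb.le hb1.le (by omega)
  have hk1 : k - 1 = (k - 2) + 1 := by omega
  rw [hk1, pow_succ, pow_succ, ← hk1]
  have hu0 : 0 ≤ a ^ (k - 2) := by positivity
  have hv0 : 0 ≤ b ^ (k - 2) := by positivity
  set u := a ^ (k - 2)
  set v := b ^ (k - 2)
  set Ga := ∑ t ∈ Finset.range (k - 1), a ^ t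
  set Gb := ∑ t ∈ Finset.range (k - 1), b ^ t
  have hk3 : (3 : ℝ) ≤ (k : ℝ) := by exact_mod_cast hk
  have key : (u + v) * k ≤ Ga + Gb := by nlinarith
  have hab0 : 0 < a * b := mul_pos ha hb
  calc (a * (v * b) + b * (u * a)) * k = (a * b) * ((u + v) * k) := by ring
    _ ≤ (a * b) * (Ga + Gb) := by apply mul_le_mul_of_nonneg_left key hab0.le
    _ = a * b * Ga + b * a * Gb := by ring

private lemma num_eq {d k : ℕ} (hk : 3 ≤ k) (x : Fin d → ℝ) (hsum : ∑ i, x i = 1) :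
    ∑ p ∈ Finset.univ.filter (fun p : Fin d × Fin d => p.1 < p.2),
        (x p.1 * x p.2 ^ (k - 1) + x p.2 * x p.1 ^ (k - 1))
      = (∑ i, x i ^ (k - 1)) - ∑ i, x i ^ k := by
  rw [sum_pairs (f := fun i j => x i * x j ^ (k - 1))]
  have h1 : ∑ i, ∑ j, x i * x j ^ (k - 1) = ∑ i, x i ^ (k - 1) := by
    rw [Finset.sum_comm]
    calc ∑ j, ∑ i, x i * x j ^ (k - 1) = ∑ j, (∑ i, x i) * x j ^ (k - 1) := by
          apply Finset.sum_congr rfl; intros; rw [Finset.sum_mul]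
      _ = ∑ j, x j ^ (k - 1) := by simp [hsum]
  have h2 : ∀ i, x i * x i ^ (k - 1) = x i ^ k := by
    intro i
    have h : k = (k - 1) + 1 := by omega
    have : x i ^ k = x i ^ (k-1) * x i := by nth_rewrite 1 [h]; rw [pow_succ]
    rw [this]; ring
  rw [h1]
  congr 1
  exact Finset.sum_congr rfl (fun i _ => h2 i)

private lemma key_ub {d k : ℕ} (hd : 2 ≤ d) (hk : 3 ≤ k) (x : Fin d → ℝ)
    (hx : ∀ i, 0 < x i ∧ x i < 1) (hsum : ∑ i, x i = 1) :
    (∑ p ∈ Finset.univ.filter (fun p : Fin d × Fin d => p.1 < p.2),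
        (x p.1 * x p.2 ^ (k - 1) + x p.2 * x p.1 ^ (k - 1))) * k
      ≤ 1 - ∑ i, x i ^ k := by
  have hpair2 : ∀ i j : Fin d, i ≠ j → x i + x j ≤ 1 := by
    intro i j hij
    rw [← hsum, ← Finset.sum_pair hij]
    apply Finset.sum_le_sum_of_subset_of_nonneg (Finset.subset_univ _)
    intro t _ _
    exact (hx t).1.le
  rw [Finset.sum_mul]
  have step1 : ∑ p ∈ Finset.univ.filter (fun p : Fin d × Fin d => p.1 < p.2),
      ((x p.1 * x p.2 ^ (k - 1) + x p.2 * x p.1 ^ (k - 1)) * k)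
      ≤ ∑ p ∈ Finset.univ.filter (fun p : Fin d × Fin d => p.1 < p.2),
        ((x p.1 * x p.2 * (∑ t ∈ Finset.range (k - 1), (x p.1) ^ t))
          + (x p.2 * x p.1 * (∑ t ∈ Finset.range (k - 1), (x p.2) ^ t))) := by
    apply Finset.sum_le_sum
    intro p hp
    simp only [Finset.mem_filter] at hp
    exact pair_ineq hk (hx p.1).1 (hx p.1).2 (hx p.2).1 (hx p.2).2 (hpair2 p.1 p.2 hp.2.ne)
  refine step1.trans ?_
  rw [sum_pairs (f := fun i j => x i * x j * (∑ t ∈ Finset.range (k - 1), (x i) ^ t))]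
  have h1 : ∑ i, ∑ j, x i * x j * (∑ t ∈ Finset.range (k - 1), (x i) ^ t)
      = ∑ i, x i * (∑ t ∈ Finset.range (k - 1), (x i) ^ t) := by
    apply Finset.sum_congr rfl
    intro i _
    calc ∑ j, x i * x j * (∑ t ∈ Finset.range (k - 1), (x i) ^ t)
        = (x i * (∑ t ∈ Finset.range (k - 1), (x i) ^ t)) * ∑ j, x j := by
          rw [Finset.mul_sum]; apply Finset.sum_congr rfl; intros; ring
      _ = x i * (∑ t ∈ Finset.range (k - 1), (x i) ^ t) := by rw [hsum, mul_one]
  rw [h1, ← Finset.sum_sub_distrib]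
  have h2 : ∀ i : Fin d, x i * (∑ t ∈ Finset.range (k - 1), (x i) ^ t)
      - x i * x i * (∑ t ∈ Finset.range (k - 1), (x i) ^ t) = x i - x i ^ k := by
    intro i
    have hg : (∑ t ∈ Finset.range (k - 1), (x i) ^ t) * (x i - 1) = x i ^ (k - 1) - 1 :=
      geom_sum_mul (x i) (k - 1)
    have hpow : x i ^ k = x i ^ (k - 1) * x i := by
      have h : k = (k - 1) + 1 := by omega
      nth_rewrite 1 [h]; rw [pow_succ]
    rw [hpow]
    linear_combination (-(x i)) * hg
  calc ∑ i, (x i * (∑ t ∈ Finset.range (k - 1), (x i) ^ t)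
        - x i * x i * (∑ t ∈ Finset.range (k - 1), (x i) ^ t))
      = ∑ i, (x i - x i ^ k) := Finset.sum_congr rfl (fun i _ => h2 i)
    _ = 1 - ∑ i, x i ^ k := by rw [Finset.sum_sub_distrib, hsum]
    _ ≤ 1 - ∑ i, x i ^ k := le_refl _

theorem sup_F_eq_inv_k (d k : ℕ) (hd : 2 ≤ d) (hk : 3 ≤ k) :
    IsLUB {y : ℝ | ∃ x : Fin d → ℝ, (∀ i, 0 < x i ∧ x i < 1) ∧ (∑ i, x i = 1) ∧
      y = (∑ p ∈ Finset.univ.filter (fun p : Fin d × Fin d => p.1 < p.2),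
            (x p.1 * x p.2 ^ (k - 1) + x p.2 * x p.1 ^ (k - 1)))
          / (1 - ∑ i, x i ^ k)} (1 / (k : ℝ)) := by
  haveI : NeZero d := ⟨by omega⟩
  constructor
  · rintro y ⟨x, hx, hsum, rfl⟩
    have hD : 0 < 1 - ∑ i, x i ^ k := by
      have hlt : ∑ i, x i ^ k < ∑ i, x i := by
        apply Finset.sum_lt_sum_of_nonempty Finset.univ_nonempty
        intro i _
        exact pow_lt_self_of_lt_one₀ (hx i).1 (hx i).2 (by omega)
      linarith [hsum ▸ hlt]
    rw [div_le_div_iff₀ hD (by positivity : (0:ℝ) < (k:ℝ)), one_mul]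
    exact key_ub hd hk x hx hsum
  · intro b hb
    haveI : NeZero d := ⟨by omega⟩
    set c : ℝ := ((d - 1 : ℕ) : ℝ) with hc_def
    have hc : 0 < c := by
      have : 1 ≤ d - 1 := by omega
      simp only [hc_def]; exact_mod_cast Nat.lt_of_lt_of_le Nat.zero_lt_one this
    -- P and Q functions
    set P : ℝ → ℝ := fun ε => c * (1 - c * ε) ^ (k - 1) + c * ε ^ (k - 2) * (1 - ε) with hP_def
    set Q : ℝ → ℝ := fun ε => c * (∑ t ∈ Finset.range k, (1 - c * ε) ^ t) - c * ε ^ (k - 1) with hQ_def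
    have hQ0 : Q 0 = c * k := by
      simp [hQ_def, zero_pow (show k - 1 ≠ 0 by omega)]
    have hP0 : P 0 = c := by
      simp [hP_def, zero_pow (show k - 2 ≠ 0 by omega)]
    have hcont : ContinuousAt (fun ε => P ε / Q ε) 0 := by
      apply ContinuousAt.div
      · fun_prop
      · apply ContinuousAt.sub
        · apply ContinuousAt.mul continuousAt_const
          exact (continuous_finset_sum _ (fun t _ => by fun_prop)).continuousAt
        · fun_prop
      · rw [hQ0]; positivity
    have hlim : Tendsto (fun ε => P ε / Q ε) (𝓝[>] (0:ℝ)) (𝓝 (1 / (k:ℝ))) := by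
      have : P 0 / Q 0 = 1 / (k : ℝ) := by
        rw [hP0, hQ0]
        rw [eq_div_iff (by positivity : (k:ℝ) ≠ 0)]
        field_simp
      rw [← this]
      exact hcont.continuousWithinAt.tendsto
    refine le_of_tendsto hlim ?_
    have hmem : Set.Ioo (0:ℝ) (1 / (2 * c)) ∈ 𝓝[>] (0:ℝ) :=
      Ioo_mem_nhdsGT_of_mem ⟨le_refl 0, by positivity⟩
    filter_upwards [hmem] with ε hε
    obtain ⟨hε0, hε1⟩ := hε
    -- the point
    set x : Fin d → ℝ := fun i => if i = 0 then 1 - c * ε else ε with hx_def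
    have hc1 : 1 ≤ c := by
      have : 1 ≤ d - 1 := by omega
      simp only [hc_def]; exact_mod_cast this
    have hεhalf : ε < 1 / 2 := by
      calc ε < 1 / (2 * c) := hε1
        _ ≤ 1 / 2 := by
          apply div_le_div_of_nonneg_left (by norm_num) (by norm_num) ?_
          linarith
    have hcε : c * ε < 1 / 2 := by
      rw [lt_div_iff₀ (by positivity : (0:ℝ) < 2 * c)] at hε1
      nlinarith
    have hxpos : ∀ i, 0 < x i ∧ x i < 1 := by
      intro i
      simp only [hx_def]
      by_cases h : i = 0 <;> simp [h]
      · constructor <;> nlinarith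
      · constructor <;> nlinarith
    have sum_ite : ∀ (g : ℝ → ℝ), ∑ i : Fin d, g (x i) = g (1 - c * ε) + c * g ε := by
      intro g
      rw [← Finset.add_sum_erase _ _ (Finset.mem_univ (0 : Fin d))]
      simp only [hx_def, if_pos rfl]
      congr 1
      rw [Finset.sum_congr rfl (fun i hi => by
        rw [if_neg (Finset.ne_of_mem_erase hi)]), Finset.sum_const,
        Finset.card_erase_of_mem (Finset.mem_univ _), Finset.card_univ, Fintype.card_fin,
        nsmul_eq_mul]
    have hsum : ∑ i, x i = 1 := by
      rw [sum_ite (fun z => z)]; ring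
    -- membership value
    have hval : (∑ p ∈ Finset.univ.filter (fun p : Fin d × Fin d => p.1 < p.2),
              (x p.1 * x p.2 ^ (k - 1) + x p.2 * x p.1 ^ (k - 1)))
            / (1 - ∑ i, x i ^ k) = P ε / Q ε := by
      rw [num_eq hk x hsum]
      have hSk1 : ∑ i, x i ^ (k - 1) = (1 - c * ε) ^ (k - 1) + c * ε ^ (k - 1) :=
        sum_ite (fun z => z ^ (k - 1))
      have hSk : ∑ i, x i ^ k = (1 - c * ε) ^ k + c * ε ^ k :=
        sum_ite (fun z => z ^ k)
      rw [hSk1, hSk]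
      have hkeq : k = (k - 1) + 1 := by omega
      have hkeq2 : k - 1 = (k - 2) + 1 := by omega
      have hN : (1 - c * ε) ^ (k - 1) + c * ε ^ (k - 1) - ((1 - c * ε) ^ k + c * ε ^ k)
          = ε * P ε := by
        have e1 : (1 - c * ε) ^ k = (1 - c * ε) ^ (k - 1) * (1 - c * ε) := by
          nth_rewrite 1 [hkeq]; rw [pow_succ]
        have e2 : (ε : ℝ) ^ k = ε ^ (k - 1) * ε := by
          nth_rewrite 1 [hkeq]; rw [pow_succ]
        have e3 : (ε : ℝ) ^ (k - 1) = ε ^ (k - 2) * ε := by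
          nth_rewrite 1 [hkeq2]; rw [pow_succ]
        rw [e1, e2, e3, hP_def]; ring
      have hD : 1 - ((1 - c * ε) ^ k + c * ε ^ k) = ε * Q ε := by
        have hg : (∑ t ∈ Finset.range k, (1 - c * ε) ^ t) * ((1 - c * ε) - 1)
            = (1 - c * ε) ^ k - 1 := geom_sum_mul _ k
        have e2 : (ε : ℝ) ^ k = ε ^ (k - 1) * ε := by
          nth_rewrite 1 [hkeq]; rw [pow_succ]
        rw [e2, hQ_def]
        linear_combination hg
      rw [hN, hD, mul_div_mul_left _ _ (ne_of_gt hε0)]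
    rw [← hval]
    apply hb
    exact ⟨x, hxpos, hsum, rfl⟩
end

section
/- For all integers d ≥ 2, k ≥ 3, and positive reals x_1, ..., x_d with x_1 + ... + x_d = 1, the inequality (∑_{1≤i<j≤d} (x_i·x_j^{k-1} + x_j·x_i^{k-1})) / (1 - ∑_{i=1}^d x_i^k) ≥ (d-1)/(d^{k-1}-1) holds, with equality when x_1 = x_2 = ... = x_d = 1/d. -/
open Finset

private lemma amgm3 (a b c : ℝ) (ha : 0 ≤ a) (hb : 0 ≤ b) (hc : 0 ≤ c) :
    3*(a*b*c) ≤ a^2*b + b^2*c + c^2*a := by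
  nlinarith [mul_nonneg ha (sq_nonneg (b-c)), mul_nonneg hb (sq_nonneg (c-a)),
    mul_nonneg hc (sq_nonneg (a-b)), mul_nonneg ha (sq_nonneg (a-b)),
    mul_nonneg hb (sq_nonneg (b-c)), mul_nonneg hc (sq_nonneg (c-a)),
    mul_nonneg (mul_nonneg ha hb) hc]

private lemma poly_sum {d : ℕ} (x : Fin d → ℝ) (s : Finset (Fin d)) (a b c e : ℝ) :
    ∑ l ∈ s, (a + b * x l + c * x l ^ 2 + e * x l ^ 3)
      = (s.card : ℝ) * a + b * ∑ l ∈ s, x l + c * ∑ l ∈ s, x l ^ 2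
        + e * ∑ l ∈ s, x l ^ 3 := by
  simp [Finset.sum_add_distrib, Finset.mul_sum, Finset.sum_const, nsmul_eq_mul]

private lemma lemB {d : ℕ} (hd : 2 ≤ d) (x : Fin d → ℝ) (hx : ∀ i, 0 ≤ x i) :
    (∑ i, x i)^3 + (d:ℝ) * ∑ i, x i^3 ≤ ((d:ℝ)+1) * ((∑ i, x i) * ∑ i, x i^2) := by
  set S1 := ∑ i, x i with hS1
  set S2 := ∑ i, x i^2 with hS2
  set S3 := ∑ i, x i^3 with hS3
  have e1 : ∀ i : Fin d, ∑ j ∈ univ.erase i, x j = S1 - x i := fun i =>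
    Finset.sum_erase_eq_sub (mem_univ i)
  have e2 : ∀ i : Fin d, ∑ j ∈ univ.erase i, x j ^ 2 = S2 - x i ^ 2 := fun i =>
    Finset.sum_erase_eq_sub (mem_univ i)
  have e3 : ∀ i : Fin d, ∑ j ∈ univ.erase i, x j ^ 3 = S3 - x i ^ 3 := fun i =>
    Finset.sum_erase_eq_sub (mem_univ i)
  have hmem : ∀ i j : Fin d, j ≠ i → j ∈ univ.erase i := fun i j hji =>
    Finset.mem_erase.2 ⟨hji, mem_univ j⟩
  have f1 : ∀ i j : Fin d, j ≠ i →
      ∑ l ∈ (univ.erase i).erase j, x l = S1 - x i - x j := by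
    intro i j hji
    rw [Finset.sum_erase_eq_sub (hmem i j hji), e1]
  have f2 : ∀ i j : Fin d, j ≠ i →
      ∑ l ∈ (univ.erase i).erase j, x l ^ 2 = S2 - x i ^ 2 - x j ^ 2 := by
    intro i j hji
    rw [Finset.sum_erase_eq_sub (hmem i j hji), e2]
  have f3 : ∀ i j : Fin d, j ≠ i →
      ∑ l ∈ (univ.erase i).erase j, x l ^ 3 = S3 - x i ^ 3 - x j ^ 3 := by
    intro i j hji
    rw [Finset.sum_erase_eq_sub (hmem i j hji), e3]
  have hcard1 : ∀ i : Fin d, ((univ.erase i).card : ℝ) = (d:ℝ) - 1 := by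
    intro i
    rw [Finset.card_erase_of_mem (mem_univ i), Finset.card_univ, Fintype.card_fin]
    have h1 : 1 ≤ d := by omega
    push_cast [Nat.cast_sub h1]
    ring
  have hcard2 : ∀ i j : Fin d, j ≠ i → (((univ.erase i).erase j).card : ℝ) = (d:ℝ) - 2 := by
    intro i j hji
    rw [Finset.card_erase_of_mem (hmem i j hji),
      Finset.card_erase_of_mem (mem_univ i), Finset.card_univ, Fintype.card_fin]
    have h1 : d - 1 - 1 = d - 2 := by omega
    rw [h1, Nat.cast_sub hd]
    norm_num
  -- stage 1 : innermost sum
  have stage1 : ∀ i j : Fin d, j ≠ i →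
      ∑ l ∈ (univ.erase i).erase j,
        ((x i^2*x j + x j^2*x l + x l^2*x i) - 3*(x i*x j*x l))
      = ((d:ℝ)-2) * (x i^2*x j) + (x j^2 - 3*(x i*x j)) * (S1 - x i - x j)
        + x i * (S2 - x i^2 - x j^2) := by
    intro i j hji
    calc ∑ l ∈ (univ.erase i).erase j,
          ((x i^2*x j + x j^2*x l + x l^2*x i) - 3*(x i*x j*x l))
        = ∑ l ∈ (univ.erase i).erase j,
          ((x i^2*x j) + (x j^2 - 3*(x i*x j)) * x l + (x i) * x l ^ 2 + 0 * x l ^ 3) :=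
          Finset.sum_congr rfl (fun l _ => by ring)
      _ = _ := by
          rw [poly_sum, hcard2 i j hji, f1 i j hji, f2 i j hji, f3 i j hji]
          ring
  -- stage 2 : middle sum
  have stage2 : ∀ i : Fin d,
      ∑ j ∈ univ.erase i, (∑ l ∈ (univ.erase i).erase j,
        ((x i^2*x j + x j^2*x l + x l^2*x i) - 3*(x i*x j*x l)))
      = ((d:ℝ)-1) * (x i * S2 - x i^3)
        + (((d:ℝ)-2)*x i^2 - 3*x i*(S1 - x i) ) * (S1 - x i)
        + (S1 + x i) * (S2 - x i^2) + (-1) * (S3 - x i^3) := by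
    intro i
    calc ∑ j ∈ univ.erase i, (∑ l ∈ (univ.erase i).erase j,
          ((x i^2*x j + x j^2*x l + x l^2*x i) - 3*(x i*x j*x l)))
        = ∑ j ∈ univ.erase i,
            (((d:ℝ)-2) * (x i^2*x j) + (x j^2 - 3*(x i*x j)) * (S1 - x i - x j)
              + x i * (S2 - x i^2 - x j^2)) := by
          refine Finset.sum_congr rfl (fun j hj => ?_)
          exact stage1 i j (Finset.mem_erase.1 hj).1
      _ = ∑ j ∈ univ.erase i,
            ((x i * S2 - x i^3)
              + (((d:ℝ)-2)*x i^2 - 3*x i*(S1 - x i)) * x j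
              + (S1 + x i) * x j ^ 2 + (-1) * x j ^ 3) :=
          Finset.sum_congr rfl (fun j _ => by ring)
      _ = _ := by
          rw [poly_sum, hcard1 i, e1 i, e2 i, e3 i]
  -- stage 3 : outer sum
  have key : ∑ i, (∑ j ∈ univ.erase i, (∑ l ∈ (univ.erase i).erase j,
        ((x i^2*x j + x j^2*x l + x l^2*x i) - 3*(x i*x j*x l))))
      = 3*(((d:ℝ)+1)*(S1*S2) - (S1^3 + (d:ℝ)*S3)) := by
    calc ∑ i, (∑ j ∈ univ.erase i, (∑ l ∈ (univ.erase i).erase j,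
          ((x i^2*x j + x j^2*x l + x l^2*x i) - 3*(x i*x j*x l))))
        = ∑ i, (((d:ℝ)-1) * (x i * S2 - x i^3)
            + (((d:ℝ)-2)*x i^2 - 3*x i*(S1 - x i) ) * (S1 - x i)
            + (S1 + x i) * (S2 - x i^2) + (-1) * (S3 - x i^3)) :=
          Finset.sum_congr rfl (fun i _ => stage2 i)
      _ = ∑ i, ((S1*S2 - S3)
            + ((d:ℝ)*S2 - 3*S1^2) * x i
            + (((d:ℝ)+3)*S1) * x i ^ 2 + (-2*(d:ℝ)) * x i ^ 3) :=
          Finset.sum_congr rfl (fun i _ => by ring)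
      _ = _ := by
          rw [poly_sum, Finset.card_univ, Fintype.card_fin, ← hS1, ← hS2, ← hS3]
          ring
  have hnn : 0 ≤ ∑ i, (∑ j ∈ univ.erase i, (∑ l ∈ (univ.erase i).erase j,
        ((x i^2*x j + x j^2*x l + x l^2*x i) - 3*(x i*x j*x l)))) := by
    refine Finset.sum_nonneg (fun i _ => Finset.sum_nonneg (fun j _ =>
      Finset.sum_nonneg (fun l _ => ?_)))
    have := amgm3 (x i) (x j) (x l) (hx i) (hx j) (hx l)
    linarith
  rw [key] at hnn
  linarith

private lemma pair_sum {d : ℕ} (x : Fin d → ℝ) (K : ℕ) (hsum : ∑ i, x i = 1) :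
    ∑ p ∈ Finset.univ.filter (fun p : Fin d × Fin d => p.1 < p.2),
      (x p.1 * x p.2 ^ K + x p.2 * x p.1 ^ K)
    = ∑ i, x i ^ K - ∑ i, x i ^ (K+1) := by
  set g : Fin d × Fin d → ℝ := fun p => x p.1 * x p.2 ^ K + x p.2 * x p.1 ^ K with hg
  have hsymm : ∑ p ∈ Finset.univ.filter (fun p : Fin d × Fin d => p.1 < p.2), g p
      = ∑ p ∈ Finset.univ.filter (fun p : Fin d × Fin d => p.2 < p.1), g p := by
    refine Finset.sum_equiv (Equiv.prodComm (Fin d) (Fin d)) (fun p => ?_) (fun p _ => ?_)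
    · simp [Equiv.prodComm]
    · simp [hg, Equiv.prodComm]; ring
  have hsplit : ∑ p ∈ Finset.univ.filter (fun p : Fin d × Fin d => p.1 < p.2), g p
      + ∑ p ∈ Finset.univ.filter (fun p : Fin d × Fin d => ¬ p.1 < p.2), g p
      = ∑ p : Fin d × Fin d, g p := Finset.sum_filter_add_sum_filter_not _ _ _
  have hsplit2 : Finset.univ.filter (fun p : Fin d × Fin d => ¬ p.1 < p.2)
      = (Finset.univ.filter (fun p : Fin d × Fin d => p.2 < p.1))
        ∪ (Finset.univ.filter (fun p : Fin d × Fin d => p.1 = p.2)) := by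
    ext p
    simp only [Finset.mem_filter, Finset.mem_union, Finset.mem_univ, true_and, not_lt]
    constructor
    · intro h
      rcases lt_or_eq_of_le h with h' | h'
      · exact Or.inl h'
      · exact Or.inr h'.symm
    · rintro (h | h)
      · exact h.le
      · exact h.ge
  have hdisj : Disjoint (Finset.univ.filter (fun p : Fin d × Fin d => p.2 < p.1))
      (Finset.univ.filter (fun p : Fin d × Fin d => p.1 = p.2)) := by
    rw [Finset.disjoint_left]
    intro p hp hp2
    simp only [Finset.mem_filter, Finset.mem_univ, true_and] at hp hp2
    rw [hp2] at hp
    exact lt_irrefl _ hp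
  have hunion : ∑ p ∈ Finset.univ.filter (fun p : Fin d × Fin d => ¬ p.1 < p.2), g p
      = ∑ p ∈ Finset.univ.filter (fun p : Fin d × Fin d => p.2 < p.1), g p
        + ∑ p ∈ Finset.univ.filter (fun p : Fin d × Fin d => p.1 = p.2), g p := by
    rw [hsplit2, Finset.sum_union hdisj]
  have hdiag : ∑ p ∈ Finset.univ.filter (fun p : Fin d × Fin d => p.1 = p.2), g p
      = ∑ i, g (i, i) := by
    refine Finset.sum_bij' (fun (p : Fin d × Fin d) (_ : p ∈ Finset.univ.filter
        (fun p : Fin d × Fin d => p.1 = p.2)) => p.1)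
      (fun (i : Fin d) (_ : i ∈ Finset.univ) => ((i, i) : Fin d × Fin d))
      (fun a ha => Finset.mem_univ _) (fun b hb => by simp) ?_ ?_ ?_
    · intro a ha
      simp only [Finset.mem_filter, Finset.mem_univ, true_and] at ha
      rw [Prod.ext_iff]
      exact ⟨rfl, ha⟩
    · intro b hb
      rfl
    · intro a ha
      simp only [Finset.mem_filter, Finset.mem_univ, true_and] at ha
      rw [hg]
      simp only
      rw [← ha]
  have hdiag2 : ∑ i, g (i, i) = 2 * ∑ i, x i ^ (K+1) := by
    rw [Finset.mul_sum]
    refine Finset.sum_congr rfl (fun i _ => ?_)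
    simp only [hg, pow_succ]
    ring
  have htot : ∑ p : Fin d × Fin d, g p = 2 * ∑ i, x i ^ K := by
    rw [Fintype.sum_prod_type]
    have : ∀ i : Fin d, ∑ j, (x i * x j ^ K + x j * x i ^ K)
        = x i * (∑ j, x j ^ K) + x i ^ K := by
      intro i
      rw [Finset.sum_add_distrib, ← Finset.mul_sum, ← Finset.sum_mul, hsum, one_mul]
    calc ∑ i, ∑ j, g (i, j) = ∑ i, (x i * (∑ j, x j ^ K) + x i ^ K) :=
          Finset.sum_congr rfl (fun i _ => this i)
      _ = (∑ i, x i) * (∑ j, x j ^ K) + ∑ i, x i ^ K := by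
          rw [Finset.sum_add_distrib, Finset.sum_mul]
      _ = 2 * ∑ i, x i ^ K := by rw [hsum]; ring
  have := hsplit
  rw [hunion, hdiag, hdiag2, htot, ← hsymm] at this
  linarith
theorem F_ge_min_and_eq (d k : ℕ) (hd : 2 ≤ d) (hk : 3 ≤ k)
    (x : Fin d → ℝ) (hx : ∀ i, 0 < x i) (hsum : ∑ i, x i = 1) :
    (∑ p ∈ Finset.univ.filter (fun p : Fin d × Fin d => p.1 < p.2),
        (x p.1 * x p.2 ^ (k - 1) + x p.2 * x p.1 ^ (k - 1)))
      / (1 - ∑ i, x i ^ k) ≥ ((d : ℝ) - 1) / ((d : ℝ) ^ (k - 1) - 1)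
    ∧ ((∀ i, x i = 1 / (d : ℝ)) →
      (∑ p ∈ Finset.univ.filter (fun p : Fin d × Fin d => p.1 < p.2),
          (x p.1 * x p.2 ^ (k - 1) + x p.2 * x p.1 ^ (k - 1)))
        / (1 - ∑ i, x i ^ k) = ((d : ℝ) - 1) / ((d : ℝ) ^ (k - 1) - 1)) := by
  obtain ⟨K, rfl⟩ : ∃ K, k = K + 1 := ⟨k - 1, by omega⟩
  have hK2 : 2 ≤ K := by omega
  simp only [Nat.add_sub_cancel]
  have hxle : ∀ i, x i < 1 := by
    intro i
    obtain ⟨j, _, hj⟩ := Finset.exists_mem_ne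
      (by rw [Finset.card_univ, Fintype.card_fin]; omega) i
    calc x i < ∑ l, x l := Finset.single_lt_sum hj (Finset.mem_univ i)
          (Finset.mem_univ j) (hx j) (fun l _ _ => (hx l).le)
      _ = 1 := hsum
  set u : ℕ → ℝ := fun m => ∑ i, (x i ^ m - x i ^ (m+1)) with hu
  have hueq : ∀ m, u m = ∑ i, x i ^ m - ∑ i, x i ^ (m+1) := fun m =>
    Finset.sum_sub_distrib _ _
  have hupos : ∀ m, 0 < u m := by
    intro m
    refine Finset.sum_pos (fun i _ => ?_) ⟨⟨0, by omega⟩, Finset.mem_univ _⟩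
    have : x i ^ (m+1) < x i ^ m :=
      pow_lt_pow_right_of_lt_one₀ (hx i) (hxle i) (Nat.lt_succ_self m)
    linarith
  have hCS : ∀ m, u (m+1) ^ 2 ≤ u m * u (m+2) := by
    intro m
    have hle : ∀ (a : ℕ) (i : Fin d), 0 ≤ x i ^ a - x i ^ (a+1) := by
      intro a i
      have : x i ^ (a+1) ≤ x i ^ a :=
        pow_le_pow_of_le_one (hx i).le (hxle i).le (Nat.le_succ a)
      linarith
    refine Finset.sum_sq_le_sum_mul_sum_of_sq_eq_mul Finset.univ
      (r := fun i => x i ^ (m+1) - x i ^ (m+2))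
      (f := fun i => x i ^ m - x i ^ (m+1))
      (g := fun i => x i ^ (m+2) - x i ^ (m+3))
      (fun i _ => hle m i) (fun i _ => hle (m+2) i) (fun i _ => by ring)
  have hB : u 1 ≤ (d:ℝ) * u 2 := by
    have hlB := lemB hd x (fun i => (hx i).le)
    rw [hsum] at hlB
    have h1 : u 1 = 1 - ∑ i, x i ^ 2 := by
      rw [hueq]
      simp [hsum]
    have h2 : u 2 = ∑ i, x i ^ 2 - ∑ i, x i ^ 3 := hueq 2
    rw [h1, h2]
    nlinarith [hlB]
  have hstep : ∀ m, 1 ≤ m → u m ≤ (d:ℝ) * u (m+1) := by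
    intro m hm
    refine Nat.le_induction hB (fun n hn ih => ?_) m hm
    have h1 := hCS n
    have h2 : u n * u (n+2) ≤ ((d:ℝ) * u (n+1)) * u (n+2) :=
      mul_le_mul_of_nonneg_right ih (hupos _).le
    refine le_of_mul_le_mul_left ?_ (hupos (n+1))
    nlinarith [h1, h2]
  have hpow : ∀ (j m : ℕ), 1 ≤ m → u m ≤ (d:ℝ)^j * u (m+j) := by
    intro j
    induction j with
    | zero => intro m _; simp
    | succ n ih =>
      intro m hm
      calc u m ≤ (d:ℝ)^n * u (m+n) := ih m hm
        _ ≤ (d:ℝ)^n * ((d:ℝ) * u (m+n+1)) :=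
            mul_le_mul_of_nonneg_left (hstep (m+n) (by omega)) (by positivity)
        _ = (d:ℝ)^(n+1) * u (m+(n+1)) := by
            rw [show m+(n+1) = m+n+1 from rfl]; ring
  have htel : ∑ j ∈ Finset.range K, u (j+1) = 1 - ∑ i, x i ^ (K+1) := by
    rw [Finset.sum_congr rfl (fun j _ => hueq (j+1)),
      Finset.sum_range_sub' (fun t => ∑ i, x i ^ (t+1)) K]
    simp [hsum]
  have hDpos : 0 < 1 - ∑ i, x i ^ (K+1) := by
    rw [← htel]
    exact Finset.sum_pos (fun j _ => hupos _) (Finset.nonempty_range_iff.2 (by omega))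
  have hDle : 1 - ∑ i, x i ^ (K+1) ≤ (∑ j ∈ Finset.range K, (d:ℝ)^j) * u K := by
    rw [← htel, Finset.sum_mul,
      ← Finset.sum_range_reflect (fun j => (d:ℝ)^j * u K) K]
    refine Finset.sum_le_sum (fun j hj => ?_)
    have hjK : j < K := Finset.mem_range.1 hj
    have h := hpow (K-1-j) (j+1) (by omega)
    rw [show j+1+(K-1-j) = K from by omega] at h
    exact h
  have hgeo : (∑ j ∈ Finset.range K, (d:ℝ)^j) * ((d:ℝ) - 1) = (d:ℝ)^K - 1 :=
    geom_sum_mul _ _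
  have hd1 : (1:ℝ) < (d:ℝ) := by exact_mod_cast Nat.lt_of_lt_of_le Nat.one_lt_two hd
  have hdK : (1:ℝ) < (d:ℝ)^K := one_lt_pow₀ hd1 (by omega)
  have hnum : ∑ p ∈ Finset.univ.filter (fun p : Fin d × Fin d => p.1 < p.2),
      (x p.1 * x p.2 ^ K + x p.2 * x p.1 ^ K) = u K := by
    rw [pair_sum x K hsum, hueq]
  rw [hnum]
  constructor
  · rw [ge_iff_le, div_le_div_iff₀ (by linarith) hDpos]
    calc ((d:ℝ) - 1) * (1 - ∑ i, x i ^ (K+1))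
        ≤ ((d:ℝ) - 1) * ((∑ j ∈ Finset.range K, (d:ℝ)^j) * u K) :=
          mul_le_mul_of_nonneg_left hDle (by linarith)
      _ = u K * ((∑ j ∈ Finset.range K, (d:ℝ)^j) * ((d:ℝ) - 1)) := by ring
      _ = u K * ((d:ℝ)^K - 1) := by rw [hgeo]
  · intro hxe
    have hd0 : (d:ℝ) ≠ 0 := by linarith
    have hSm : ∀ m : ℕ, ∑ i, x i ^ m = (d:ℝ) * (1/(d:ℝ))^m := by
      intro m
      simp only [hxe]
      rw [Finset.sum_const, Finset.card_univ, Fintype.card_fin, nsmul_eq_mul]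
    have huK : u K = (d:ℝ) * (1/(d:ℝ))^K - (d:ℝ) * (1/(d:ℝ))^(K+1) := by
      rw [hueq, hSm, hSm]
    have hden : 1 - ∑ i, x i ^ (K+1) = ((d:ℝ)^K - 1) / (d:ℝ)^K := by
      rw [hSm]
      field_simp
      simp only [one_div, inv_pow]
      field_simp
      ring
    rw [huK, hden]
    rw [div_eq_div_iff (ne_of_gt (div_pos (by linarith) (by positivity))) (by intro h; linarith)]
    field_simp
    simp only [one_div, inv_pow]
    field_simp
    ring
end

section
/- Muirhead's inequality: if (a_1,...,a_n) majorises (b_1,...,b_n) (both weakly decreasing real sequences with equal sums and partial-sum domination), then for any positive reals x_1,...,x_n, ∑_{π ∈ S_n} ∏_{i=1}^n x_{π(i)}^{a_i} ≥ ∑_{π ∈ S_n} ∏_{i=1}^n x_{π(i)}^{b_i}. -/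
open Finset

open Finset

lemma bracket (u v p q p' q' : ℝ) (hu : 0 < u) (hv : 0 < v)
    (h1 : q ≤ q') (h2 : q' ≤ p') (h3 : p' ≤ p) (hpq : p + q = p' + q') :
    u ^ p' * v ^ q' + u ^ q' * v ^ p' ≤ u ^ p * v ^ q + u ^ q * v ^ p := by
  set S := p' - q with hS
  set T := q' - q with hT
  have hs : (0:ℝ) ≤ S := by simp [hS]; linarith
  have ht : (0:ℝ) ≤ T := by simp [hT]; linarith
  have hfac : 0 ≤ (u ^ S - v ^ S) * (u ^ T - v ^ T) := by
    rcases le_total u v with h | h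
    · have h1' := Real.rpow_le_rpow hu.le h hs
      have h2' := Real.rpow_le_rpow hu.le h ht
      nlinarith
    · have h1' := Real.rpow_le_rpow hv.le h hs
      have h2' := Real.rpow_le_rpow hv.le h ht
      nlinarith
  have ep : p = (q + S) + T := by simp [hS, hT]; linarith
  have ep' : p' = q + S := by simp [hS]
  have eq' : q' = q + T := by simp [hT]
  have e1 : u ^ p = u ^ q * u ^ S * u ^ T := by
    rw [ep, Real.rpow_add hu, Real.rpow_add hu]
  have e2 : v ^ p = v ^ q * v ^ S * v ^ T := by
    rw [ep, Real.rpow_add hv, Real.rpow_add hv]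
  have e3 : u ^ p' = u ^ q * u ^ S := by rw [ep', Real.rpow_add hu]
  have e4 : v ^ p' = v ^ q * v ^ S := by rw [ep', Real.rpow_add hv]
  have e5 : u ^ q' = u ^ q * u ^ T := by rw [eq', Real.rpow_add hu]
  have e6 : v ^ q' = v ^ q * v ^ T := by rw [eq', Real.rpow_add hv]
  rw [e1, e2, e3, e4, e5, e6]
  have huq : 0 < u ^ q := Real.rpow_pos_of_pos hu q
  have hvq : 0 < v ^ q := Real.rpow_pos_of_pos hv q
  nlinarith [mul_pos huq hvq]


lemma prod_split (n : ℕ) (f : Fin n → ℝ) (j k : Fin n) (hjk : j ≠ k) :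
    ∏ i, f i = f j * f k * ∏ i ∈ (univ.erase j).erase k, f i := by
  rw [mul_assoc, Finset.mul_prod_erase _ _ (Finset.mem_erase.2 ⟨Ne.symm hjk, mem_univ k⟩),
    Finset.mul_prod_erase _ _ (mem_univ j)]

lemma swap_step (n : ℕ) (x : Fin n → ℝ) (hx : ∀ i, 0 < x i) (a : Fin n → ℝ)
    (j k : Fin n) (hjk : j ≠ k) (t : ℝ) (ht : 0 ≤ t) (hpin : a k + t ≤ a j - t) :
    ∑ π : Equiv.Perm (Fin n),
        ∏ i, Real.rpow (x (π i)) (Function.update (Function.update a j (a j - t)) k (a k + t) i)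
      ≤ ∑ π : Equiv.Perm (Fin n), ∏ i, Real.rpow (x (π i)) (a i) := by
  set a' := Function.update (Function.update a j (a j - t)) k (a k + t) with ha'
  have ha'j : a' j = a j - t := by
    simp [ha', Function.update_apply, hjk]
  have ha'k : a' k = a k + t := by simp [ha']
  have ha'o : ∀ i, i ≠ j → i ≠ k → a' i = a i := by
    intro i h1 h2; simp [ha', Function.update_apply, h1, h2]
  set g : Equiv.Perm (Fin n) → ℝ := fun π =>
    (∏ i, Real.rpow (x (π i)) (a i)) - ∏ i, Real.rpow (x (π i)) (a' i) with hg
  suffices h : 0 ≤ ∑ π : Equiv.Perm (Fin n), g π by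
    simp only [hg, Finset.sum_sub_distrib] at h
    linarith
  have hswap : ∀ π : Equiv.Perm (Fin n),
      0 ≤ g π + g (π * Equiv.swap j k) := by
    intro π
    set u := x (π j) with hu
    set v := x (π k) with hv
    set C := ∏ i ∈ (univ.erase j).erase k, Real.rpow (x (π i)) (a i) with hC
    have hCpos : 0 ≤ C := Finset.prod_nonneg fun i _ => (Real.rpow_pos_of_pos (hx _) _).le
    have hmem : ∀ i ∈ (univ.erase j).erase k, (Equiv.swap j k) i = i := by
      intro i hi
      rw [Finset.mem_erase, Finset.mem_erase] at hi
      exact Equiv.swap_apply_of_ne_of_ne hi.2.1 hi.1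
    have e1 : ∏ i, Real.rpow (x (π i)) (a i) = u ^ a j * v ^ a k * C := by
      rw [prod_split n _ j k hjk]; rfl
    have e2 : ∏ i, Real.rpow (x (π i)) (a' i) = u ^ a' j * v ^ a' k * C := by
      rw [prod_split n _ j k hjk]
      congr 1
      exact Finset.prod_congr rfl fun i hi => by
        rw [Finset.mem_erase, Finset.mem_erase] at hi
        rw [ha'o i hi.2.1 hi.1]
    have e3 : ∏ i, Real.rpow (x ((π * Equiv.swap j k) i)) (a i) = v ^ a j * u ^ a k * C := by
      rw [prod_split n _ j k hjk]
      simp only [Equiv.Perm.mul_apply, Equiv.swap_apply_left, Equiv.swap_apply_right]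
      congr 1
      exact Finset.prod_congr rfl fun i hi => by rw [hmem i hi]
    have e4 : ∏ i, Real.rpow (x ((π * Equiv.swap j k) i)) (a' i) = v ^ a' j * u ^ a' k * C := by
      rw [prod_split n _ j k hjk]
      simp only [Equiv.Perm.mul_apply, Equiv.swap_apply_left, Equiv.swap_apply_right]
      congr 1
      refine Finset.prod_congr rfl fun i hi => ?_
      rw [Finset.mem_erase, Finset.mem_erase] at hi
      rw [Equiv.swap_apply_of_ne_of_ne hi.2.1 hi.1, ha'o i hi.2.1 hi.1]
    have hb := bracket u v (a j) (a k) (a j - t) (a k + t) (hx _) (hx _)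
      (by linarith) hpin (by linarith) (by ring)
    simp only [hg, e1, e2, e3, e4, ha'j, ha'k]
    nlinarith [mul_nonneg hCpos (sub_nonneg.2 hb)]
  have hbij : ∑ π : Equiv.Perm (Fin n), g (π * Equiv.swap j k)
      = ∑ π : Equiv.Perm (Fin n), g π :=
    Fintype.sum_equiv (Equiv.mulRight (Equiv.swap j k)) _ _ (fun π => rfl)
  have h2 : 0 ≤ ∑ π : Equiv.Perm (Fin n), (g π + g (π * Equiv.swap j k)) :=
    Finset.sum_nonneg fun π _ => hswap π
  rw [Finset.sum_add_distrib, hbij] at h2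
  linarith


lemma sum_split {n : ℕ} (s : Finset (Fin n)) (f : Fin n → ℝ) (j k : Fin n)
    (hj : j ∈ s) (hk : k ∈ s) (hjk : j ≠ k) :
    ∑ i ∈ s, f i = f j + f k + ∑ i ∈ (s.erase j).erase k, f i := by
  rw [add_assoc, Finset.add_sum_erase _ _ (Finset.mem_erase.2 ⟨Ne.symm hjk, hk⟩),
    Finset.add_sum_erase _ _ hj]

lemma muirhead_aux (n : ℕ) (x : Fin n → ℝ) (hx : ∀ i, 0 < x i) (b : Fin n → ℝ)
    (hb_mono : ∀ i j : Fin n, i ≤ j → b j ≤ b i) :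
    ∀ N : ℕ, ∀ a : Fin n → ℝ,
    (Finset.univ.filter fun i => a i ≠ b i).card ≤ N →
    (∀ i j : Fin n, i ≤ j → a j ≤ a i) →
    (∀ m : ℕ, m ≤ n → ∑ i ∈ Finset.univ.filter (fun i : Fin n => (i : ℕ) < m), b i
        ≤ ∑ i ∈ Finset.univ.filter (fun i : Fin n => (i : ℕ) < m), a i) →
    (∑ i, a i = ∑ i, b i) →
    ∑ π : Equiv.Perm (Fin n), ∏ i, Real.rpow (x (π i)) (b i)
      ≤ ∑ π : Equiv.Perm (Fin n), ∏ i, Real.rpow (x (π i)) (a i) := by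
  intro N
  induction N with
  | zero =>
    intro a hcard _ _ _
    have : a = b := by
      funext i
      by_contra hi
      have : i ∈ Finset.univ.filter fun i => a i ≠ b i := by simp [hi]
      have := Finset.card_pos.2 ⟨i, this⟩
      omega
    rw [this]
  | succ N IH =>
    intro a hcard ha_mono hmaj hsum
    by_cases h0 : (Finset.univ.filter fun i => a i ≠ b i).card = 0
    · have : a = b := by
        funext i
        by_contra hi
        have : i ∈ Finset.univ.filter fun i => a i ≠ b i := by simp [hi]
        have := Finset.card_pos.2 ⟨i, this⟩
        omega
      rw [this]
    -- there is a discrepancy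
    have hex : ∃ i, a i ≠ b i := by
      obtain ⟨i, hi⟩ := Finset.card_pos.1 (Nat.pos_of_ne_zero h0)
      exact ⟨i, (Finset.mem_filter.1 hi).2⟩
    set S := Finset.univ.filter (fun i : Fin n => a i < b i) with hSdef
    have hS : S.Nonempty := by
      by_contra hS0
      rw [Finset.not_nonempty_iff_eq_empty, Finset.filter_eq_empty_iff] at hS0
      have hle : ∀ i ∈ Finset.univ, b i ≤ a i := fun i _ => not_lt.1 (hS0 (Finset.mem_univ i))
      have := (Finset.sum_eq_sum_iff_of_le hle).1 hsum.symm
      obtain ⟨i, hi⟩ := hex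
      exact hi ((this i (Finset.mem_univ i)).symm)
    set k := S.min' hS with hkdef
    have hk : a k < b k := (Finset.mem_filter.1 (S.min'_mem hS)).2
    have hkmin : ∀ i : Fin n, a i < b i → k ≤ i := fun i hi =>
      S.min'_le i (Finset.mem_filter.2 ⟨Finset.mem_univ i, hi⟩)
    set T := Finset.univ.filter (fun i : Fin n => i < k ∧ b i < a i) with hTdef
    have hT : T.Nonempty := by
      by_contra hT0
      rw [Finset.not_nonempty_iff_eq_empty, Finset.filter_eq_empty_iff] at hT0
      have heqlt : ∀ i : Fin n, i < k → a i = b i := by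
        intro i hik
        have h1 : ¬ b i < a i := fun h => hT0 (Finset.mem_univ i) ⟨hik, h⟩
        have h2 : ¬ a i < b i := fun h => absurd (hkmin i h) (not_le.2 hik)
        linarith [not_lt.1 h1, not_lt.1 h2]
      have hins : Finset.univ.filter (fun i : Fin n => (i : ℕ) < (k : ℕ) + 1)
          = insert k (Finset.univ.filter (fun i : Fin n => (i : ℕ) < (k : ℕ))) := by
        ext i
        simp only [Finset.mem_filter, Finset.mem_univ, true_and, Finset.mem_insert, Fin.ext_iff]
        omega
      have hknot : k ∉ Finset.univ.filter (fun i : Fin n => (i : ℕ) < (k : ℕ)) := by simp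
      have heqsum : ∑ i ∈ Finset.univ.filter (fun i : Fin n => (i : ℕ) < (k : ℕ)), a i
          = ∑ i ∈ Finset.univ.filter (fun i : Fin n => (i : ℕ) < (k : ℕ)), b i := by
        refine Finset.sum_congr rfl fun i hi => ?_
        have := (Finset.mem_filter.1 hi).2
        exact heqlt i (by rwa [Fin.lt_def])
      have hmaj1 := hmaj ((k : ℕ) + 1) k.isLt
      rw [hins, Finset.sum_insert hknot, Finset.sum_insert hknot, heqsum] at hmaj1
      linarith
    set j := T.max' hT with hjdef
    have hjk' : j < k ∧ b j < a j := (Finset.mem_filter.1 (T.max'_mem hT)).2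
    have hjmax : ∀ i : Fin n, i < k → b i < a i → i ≤ j := fun i h1 h2 =>
      T.le_max' i (Finset.mem_filter.2 ⟨Finset.mem_univ i, h1, h2⟩)
    have hbetween : ∀ i : Fin n, j < i → i < k → a i = b i := by
      intro i h1 h2
      have hna : ¬ a i < b i := fun h => absurd (hkmin i h) (not_le.2 h2)
      have hnb : ¬ b i < a i := fun h => absurd (hjmax i h2 h) (not_le.2 h1)
      linarith [not_lt.1 hna, not_lt.1 hnb]
    have hjk : j ≠ k := ne_of_lt hjk'.1
    set t := min (a j - b j) (b k - a k) with htdef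
    have ht : 0 < t := lt_min (by linarith [hjk'.2]) (by linarith)
    have htj : t ≤ a j - b j := min_le_left _ _
    have htk : t ≤ b k - a k := min_le_right _ _
    have hbjk : b k ≤ b j := hb_mono j k (le_of_lt hjk'.1)
    have hpin : a k + t ≤ a j - t := by linarith
    set a' := Function.update (Function.update a j (a j - t)) k (a k + t) with ha'def
    have ha'j : a' j = a j - t := by simp [ha'def, Function.update_apply, hjk]
    have ha'k : a' k = a k + t := by simp [ha'def]
    have ha'o : ∀ i, i ≠ j → i ≠ k → a' i = a i := by
      intro i h1 h2; simp [ha'def, Function.update_apply, h1, h2]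
    -- step inequality
    have hstep := swap_step n x hx a j k hjk t ht.le hpin
    rw [← ha'def] at hstep
    -- card decreases
    have hcard' : (Finset.univ.filter fun i => a' i ≠ b i).card ≤ N := by
      have hsub : (Finset.univ.filter fun i => a' i ≠ b i)
          ⊆ (Finset.univ.filter fun i => a i ≠ b i) := by
        intro i hi
        rw [Finset.mem_filter] at hi ⊢
        refine ⟨Finset.mem_univ i, ?_⟩
        rcases eq_or_ne i j with rfl | h1
        · exact ne_of_gt hjk'.2
        rcases eq_or_ne i k with rfl | h2
        · exact ne_of_lt hk
        rw [ha'o i h1 h2] at hi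
        exact hi.2
      have hssub : (Finset.univ.filter fun i => a' i ≠ b i)
          ⊂ (Finset.univ.filter fun i => a i ≠ b i) := by
        refine Finset.ssubset_iff_of_subset hsub |>.2 ?_
        rcases le_total (a j - b j) (b k - a k) with h | h
        · refine ⟨j, ?_, ?_⟩
          · simp only [Finset.mem_filter, Finset.mem_univ, true_and]
            exact ne_of_gt hjk'.2
          · simp only [Finset.mem_filter, Finset.mem_univ, true_and, not_not]
            rw [ha'j, htdef, min_eq_left h]; ring
        · refine ⟨k, ?_, ?_⟩
          · simp only [Finset.mem_filter, Finset.mem_univ, true_and]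
            exact ne_of_lt hk
          · simp only [Finset.mem_filter, Finset.mem_univ, true_and, not_not]
            rw [ha'k, htdef, min_eq_right h]; ring
      have := Finset.card_lt_card hssub
      omega
    -- monotonicity of a'
    have ha'_mono : ∀ i₁ i₂ : Fin n, i₁ ≤ i₂ → a' i₂ ≤ a' i₁ := by
      intro i₁ i₂ h12
      rcases eq_or_ne i₁ j with rfl | h1j
      · -- i₁ = j
        rw [ha'j]
        rcases eq_or_ne i₂ j with rfl | h2j
        · rw [ha'j]
        rcases eq_or_ne i₂ k with rfl | h2k
        · rw [ha'k]; exact hpin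
        rw [ha'o i₂ h2j h2k]
        have hji2 : j < i₂ := lt_of_le_of_ne h12 (Ne.symm h2j)
        rcases lt_or_ge i₂ k with h2k' | h2k'
        · rw [hbetween i₂ hji2 h2k']
          linarith [hb_mono j i₂ h12]
        · have := ha_mono k i₂ h2k'
          linarith
      rcases eq_or_ne i₁ k with rfl | h1k
      · -- i₁ = k
        rw [ha'k]
        rcases eq_or_ne i₂ j with rfl | h2j
        · exact absurd (lt_of_lt_of_le hjk'.1 h12) (lt_irrefl j)
        rcases eq_or_ne i₂ k with rfl | h2k
        · rw [ha'k]
        rw [ha'o i₂ h2j h2k]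
        linarith [ha_mono k i₂ h12]
      rw [ha'o i₁ h1j h1k]
      rcases eq_or_ne i₂ j with rfl | h2j
      · rw [ha'j]
        linarith [ha_mono i₁ j h12]
      rcases eq_or_ne i₂ k with rfl | h2k
      · rw [ha'k]
        rcases le_or_gt i₁ j with h1j' | h1j'
        · have := ha_mono i₁ j h1j'
          linarith
        · have h1k' : i₁ < k := lt_of_le_of_ne h12 h1k
          rw [hbetween i₁ h1j' h1k']
          linarith [hb_mono i₁ k h12]
      rw [ha'o i₂ h2j h2k]
      exact ha_mono i₁ i₂ h12
    -- sum preserved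
    have hsum' : ∑ i, a' i = ∑ i, b i := by
      rw [← hsum, sum_split Finset.univ a' j k (Finset.mem_univ j) (Finset.mem_univ k) hjk,
        sum_split Finset.univ a j k (Finset.mem_univ j) (Finset.mem_univ k) hjk,
        ha'j, ha'k]
      have : ∑ i ∈ (Finset.univ.erase j).erase k, a' i
          = ∑ i ∈ (Finset.univ.erase j).erase k, a i := by
        refine Finset.sum_congr rfl fun i hi => ?_
        rw [Finset.mem_erase, Finset.mem_erase] at hi
        exact ha'o i hi.2.1 hi.1
      rw [this]; ring
    -- majorization preserved
    have hmaj' : ∀ m : ℕ, m ≤ n →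
        ∑ i ∈ Finset.univ.filter (fun i : Fin n => (i : ℕ) < m), b i
          ≤ ∑ i ∈ Finset.univ.filter (fun i : Fin n => (i : ℕ) < m), a' i := by
      intro m hm
      set D := Finset.univ.filter (fun i : Fin n => (i : ℕ) < m) with hD
      rcases le_or_gt m (j : ℕ) with hmj | hmj
      · -- neither j nor k in D
        have : ∑ i ∈ D, a' i = ∑ i ∈ D, a i := by
          refine Finset.sum_congr rfl fun i hi => ?_
          have hi' := (Finset.mem_filter.1 hi).2
          have hij : i ≠ j := by
            intro h; rw [h] at hi'; omega
          have hik : i ≠ k := by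
            intro h; rw [h] at hi'
            have : (j:ℕ) < (k:ℕ) := hjk'.1
            omega
          exact ha'o i hij hik
        rw [this]; exact hmaj m hm
      rcases le_or_gt m (k : ℕ) with hmk | hmk
      · -- j in D, k not in D
        have hjD : j ∈ D := by simp [hD, hmj]
        have hsplit : ∑ i ∈ D, a' i = a' j + ∑ i ∈ D.erase j, a' i :=
          (Finset.add_sum_erase _ _ hjD).symm
        have hsplita : ∑ i ∈ D, a i = a j + ∑ i ∈ D.erase j, a i :=
          (Finset.add_sum_erase _ _ hjD).symm
        have htail : ∑ i ∈ D.erase j, a' i = ∑ i ∈ D.erase j, a i := by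
          refine Finset.sum_congr rfl fun i hi => ?_
          rw [Finset.mem_erase] at hi
          have hi' := (Finset.mem_filter.1 hi.2).2
          have hik : i ≠ k := by intro h; rw [h] at hi'; omega
          exact ha'o i hi.1 hik
        -- show sum over D of (a - b) ≥ t
        set Dj := Finset.univ.filter (fun i : Fin n => (i : ℕ) < (j : ℕ)) with hDj
        have hDjD : Dj ⊆ D := by
          intro i hi
          simp only [hDj, hD, Finset.mem_filter, Finset.mem_univ, true_and] at hi ⊢
          omega
        have h1 : ∑ i ∈ Dj, (a i - b i) ≥ 0 := by
          have := hmaj (j : ℕ) (le_of_lt (lt_of_lt_of_le j.isLt (le_refl n)))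
          rw [Finset.sum_sub_distrib]
          linarith
        have hjmem : j ∈ D \ Dj := by
          simp [hD, hDj, Finset.mem_sdiff, hmj]
        have h2 : ∑ i ∈ D \ Dj, (a i - b i) = a j - b j := by
          refine Finset.sum_eq_single_of_mem j hjmem fun i hi hij => ?_
          rw [Finset.mem_sdiff] at hi
          have h1' := (Finset.mem_filter.1 hi.1).2
          have h2' : ¬ (i : ℕ) < (j : ℕ) := by
            intro h
            exact hi.2 (Finset.mem_filter.2 ⟨Finset.mem_univ i, h⟩)
          have hvne : (i : ℕ) ≠ (j : ℕ) := fun h => hij (Fin.ext h)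
          have hji : j < i := by rw [Fin.lt_def]; omega
          have hik : i < k := by rw [Fin.lt_def]; omega
          rw [hbetween i hji hik]; ring
        have h3 : ∑ i ∈ D, (a i - b i) = ∑ i ∈ D \ Dj, (a i - b i) + ∑ i ∈ Dj, (a i - b i) :=
          (Finset.sum_sdiff hDjD).symm
        rw [Finset.sum_sub_distrib] at h3
        rw [hsplit, htail, ha'j]
        rw [hsplita] at h3
        linarith
      · -- both j and k in D
        have hjD : j ∈ D := by
          simp only [hD, Finset.mem_filter, Finset.mem_univ, true_and]
          omega
        have hkD : k ∈ D := by
          simp only [hD, Finset.mem_filter, Finset.mem_univ, true_and]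
          omega
        have : ∑ i ∈ D, a' i = ∑ i ∈ D, a i := by
          rw [sum_split D a' j k hjD hkD hjk, sum_split D a j k hjD hkD hjk, ha'j, ha'k]
          have : ∑ i ∈ (D.erase j).erase k, a' i = ∑ i ∈ (D.erase j).erase k, a i := by
            refine Finset.sum_congr rfl fun i hi => ?_
            rw [Finset.mem_erase, Finset.mem_erase] at hi
            exact ha'o i hi.2.1 hi.1
          rw [this]; ring
        rw [this]; exact hmaj m hm
    exact le_trans (IH a' hcard' ha'_mono hmaj' hsum') hstep


theorem muirhead (n : ℕ) (hn : 0 < n) (a b : Fin n → ℝ)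
    (ha_mono : ∀ i j : Fin n, i ≤ j → a j ≤ a i)
    (hb_mono : ∀ i j : Fin n, i ≤ j → b j ≤ b i)
    (ha_nonneg : ∀ i, 0 ≤ a i) (hb_nonneg : ∀ i, 0 ≤ b i)
    (hsum : ∑ i, a i = ∑ i, b i)
    (hmaj : ∀ m : ℕ, m < n →
      ∑ i ∈ Finset.univ.filter (fun i : Fin n => (i : ℕ) < m), b i
        ≤ ∑ i ∈ Finset.univ.filter (fun i : Fin n => (i : ℕ) < m), a i)
    (x : Fin n → ℝ) (hx : ∀ i, 0 < x i) :
    ∑ π : Equiv.Perm (Fin n), ∏ i, Real.rpow (x (π i)) (b i)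
      ≤ ∑ π : Equiv.Perm (Fin n), ∏ i, Real.rpow (x (π i)) (a i) := by
  have hmaj' : ∀ m : ℕ, m ≤ n →
      ∑ i ∈ Finset.univ.filter (fun i : Fin n => (i : ℕ) < m), b i
        ≤ ∑ i ∈ Finset.univ.filter (fun i : Fin n => (i : ℕ) < m), a i := by
    intro m hm
    rcases Nat.lt_or_ge m n with h | h
    · exact hmaj m h
    · have huniv : Finset.univ.filter (fun i : Fin n => (i : ℕ) < m) = Finset.univ := by
        ext i
        simp only [Finset.mem_filter, Finset.mem_univ, true_and, iff_true]
        have := i.isLt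
        omega
      rw [huniv]
      exact le_of_eq hsum.symm
  exact muirhead_aux n x hx b hb_mono _ a le_rfl ha_mono hmaj' hsum
end

section
/- Fix integers d ≥ 2 and r with 2 ≤ r ≤ d, and let k ≥ 2 with r-1 dividing k-1. The count c(F^r_k, CD^d_h) of copies of the k-leaf r-ary caterpillar in the complete d-ary tree of height h satisfies the recursion c(F^r_k, CD^d_h) = d·c(F^r_k, CD^d_{h-1}) + r·C(d,r)·d^{(h-1)(r-1)}·c(F^r_{k-r+1}, CD^d_{h-1}) for k > r and h > 1, with c(F^r_r, CD^d_h) = C(d,r)·(d^{rh} - d^h)/(d^r - d); then c(F^r_k, CD^d_h) = C(d,r)^{(k-1)/(r-1)}·(r/d)^{(k-r)/(r-1)}·d^{h-1}·∏_{i=1}^{(k-1)/(r-1)} (d^{h(r-1)} - d^{(i-1)(r-1)})/(d^{i(r-1)} - 1). -/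
open Finset

private lemma prod_Icc_one_eq_range (f : ℕ → ℝ) (m : ℕ) :
    ∏ i ∈ Icc 1 m, f i = ∏ i ∈ range m, f (i + 1) := by
  induction m with
  | zero => simp
  | succ n ih => rw [Finset.prod_Icc_succ_top (by omega), ih, Finset.prod_range_succ]

private lemma num_rec (y : ℝ) (m h : ℕ) :
    ∏ i ∈ range (m+1), (y^(h+1) - y^i)
      = (y^(h+1) - 1) * y^m * ∏ i ∈ range m, (y^h - y^i) := by
  rw [Finset.prod_range_succ']
  have h1 : ∀ i ∈ range m, y^(h+1) - y^(i+1) = y * (y^h - y^i) := by intro i _; ring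
  rw [Finset.prod_congr rfl h1, Finset.prod_mul_distrib, Finset.prod_const]
  simp; ring

theorem rary_caterpillar_count_complete_tree (d r : ℕ) (hd : 2 ≤ d) (hr2 : 2 ≤ r)
    (hrd : r ≤ d) (c : ℕ → ℕ → ℝ)
    (hbase : ∀ h : ℕ, 1 ≤ h →
      c r h = (d.choose r : ℝ) * (((d : ℝ) ^ (r * h) - (d : ℝ) ^ h) / ((d : ℝ) ^ r - d)))
    (hbase1 : ∀ k : ℕ, r < k → c k 1 = 0)
    (hrec : ∀ k h : ℕ, r < k → 1 < h →
      c k h = (d : ℝ) * c k (h - 1)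
        + (r : ℝ) * (d.choose r : ℝ) * (d : ℝ) ^ ((h - 1) * (r - 1)) * c (k - r + 1) (h - 1)) :
    ∀ k h : ℕ, 2 ≤ k → (r - 1) ∣ (k - 1) → 1 ≤ h →
      c k h = (d.choose r : ℝ) ^ ((k - 1) / (r - 1)) * ((r : ℝ) / (d : ℝ)) ^ ((k - r) / (r - 1))
        * (d : ℝ) ^ (h - 1) *
        ∏ i ∈ Finset.Icc 1 ((k - 1) / (r - 1)),
          ((d : ℝ) ^ (h * (r - 1)) - (d : ℝ) ^ ((i - 1) * (r - 1)))
            / ((d : ℝ) ^ (i * (r - 1)) - 1) := by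
  intro k h hk hdvd hh
  set q := r - 1 with hqdef
  have hq1 : 1 ≤ q := by omega
  have hrq : r = q + 1 := by omega
  have hd0 : (d : ℝ) ≠ 0 := by positivity
  have hd1 : (1 : ℝ) < (d : ℝ) := by exact_mod_cast (by omega : 1 < d)
  set y : ℝ := (d : ℝ) ^ q with hydef
  have hy1 : 1 < y := one_lt_pow₀ hd1 (by omega)
  have hynz : ∀ n : ℕ, y ^ (n + 1) - 1 ≠ 0 := by
    intro n
    have : 1 < y ^ (n + 1) := one_lt_pow₀ hy1 (by omega)
    intro hcon; nlinarith
  have hy0 : y - 1 ≠ 0 := sub_ne_zero.mpr (ne_of_gt hy1)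
  have hBnz : ∀ n : ℕ, (∏ i ∈ range n, (y ^ (i + 1) - 1)) ≠ 0 := by
    intro n
    refine Finset.prod_ne_zero_iff.mpr ?_
    intro i _; exact hynz i
  set C : ℝ := (d.choose r : ℝ) with hCdef
  have hdr : (d : ℝ) ^ r = y * (d : ℝ) := by
    rw [hydef, hrq, pow_succ]
  -- auxiliary statement, heights shifted by one
  have aux : ∀ h : ℕ, ∀ m : ℕ, 1 ≤ m → c (m * q + 1) (h + 1)
      = C ^ m * ((r : ℝ) / d) ^ (m - 1) * (d : ℝ) ^ h *
        ∏ i ∈ range m, ((y ^ (h + 1) - y ^ i) / (y ^ (i + 1) - 1)) := by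
    intro h
    induction h with
    | zero =>
      intro m hm
      match m, hm with
      | 1, _ =>
        have hk1 : 1 * q + 1 = r := by omega
        rw [hk1, hbase 1 le_rfl]
        have : ((d : ℝ) ^ (r * 1) - (d : ℝ) ^ 1) / ((d : ℝ) ^ r - d) = 1 := by
          rw [mul_one, pow_one]
          refine div_self ?_
          rw [hdr]
          have := hynz 0
          rw [pow_one] at this
          intro hcon
          apply this
          have : y * (d:ℝ) - (d:ℝ) = ((d:ℝ)) * (y - 1) := by ring
          rw [this] at hcon
          rcases mul_eq_zero.mp hcon with h1 | h1
          · exact absurd h1 hd0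
          · exact absurd h1 hy0
        rw [this]
        simp [div_self hy0]
      | (p + 2), _ =>
        have hkr : r < (p + 2) * q + 1 := by
          have h1 : (p + 2) * q = p * q + 2 * q := by ring
          omega
        rw [hbase1 _ hkr]
        have h1 : (1:ℕ) ∈ range (p + 2) := by simp
        have h0 : ((y ^ (0 + 1) - y ^ 1) / (y ^ (1 + 1) - 1)) = 0 := by
          simp
        rw [Finset.prod_eq_zero h1 h0]
        ring
    | succ n ih =>
      intro m hm
      match m, hm with
      | 1, _ =>
        have hk1 : 1 * q + 1 = r := by omega
        rw [hk1, hbase (n + 2) (by omega)]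
        have hnum : (d : ℝ) ^ (r * (n + 2)) = y ^ (n + 2) * (d : ℝ) ^ (n + 2) := by
          rw [pow_mul, hdr, mul_pow]
        rw [hnum]
        rw [Finset.prod_range_one]
        simp only [pow_zero, pow_one, one_mul, mul_one]
        rw [hdr]
        have hden : y * (d : ℝ) - d ≠ 0 := by
          have : y * (d : ℝ) - d = (d : ℝ) * (y - 1) := by ring
          rw [this]
          exact mul_ne_zero hd0 hy0
        simp only [Nat.sub_self, zero_add, pow_zero, pow_one, mul_one]
        field_simp
        ring
      | (p + 2), _ =>
        have hkr : r < (p + 2) * q + 1 := by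
          have h1 : (p + 2) * q = p * q + 2 * q := by ring
          omega
        have hrec' := hrec ((p + 2) * q + 1) (n + 2) hkr (by omega)
        rw [show (n:ℕ) + 2 - 1 = n + 1 from rfl] at hrec'
        have hk' : (p + 2) * q + 1 - r + 1 = (p + 1) * q + 1 := by
          have h1 : (p + 2) * q = (p + 1) * q + q := by ring
          omega
        rw [hk'] at hrec'
        rw [ih (p + 2) (by omega), ih (p + 1) (by omega)] at hrec'
        rw [show (n:ℕ) + 1 + 1 = n + 2 from rfl, hrec']
        simp only [Nat.add_sub_cancel]
        rw [show p + 2 - 1 = p + 1 by omega]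
        rw [Finset.prod_div_distrib, Finset.prod_div_distrib, Finset.prod_div_distrib]
        rw [show (p:ℕ) + 2 = (p + 1) + 1 from rfl]
        rw [num_rec y (p + 1) (n + 1)]
        rw [Finset.prod_range_succ (fun i => y ^ (n + 1) - y ^ i) (p + 1)]
        rw [Finset.prod_range_succ (fun i => y ^ (i + 1) - 1) (p + 1)]
        have hdq : (d : ℝ) ^ ((n + 1) * q) = y ^ (n + 1) := by
          rw [hydef, ← pow_mul, mul_comm]
        rw [hdq]
        set A := ∏ i ∈ range (p + 1), (y ^ (n + 1) - y ^ i) with hA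
        set B := ∏ i ∈ range (p + 1), (y ^ (i + 1) - 1) with hB
        have hBnz' : B ≠ 0 := hBnz (p + 1)
        have hp2 : y ^ (p + 1 + 1) - 1 ≠ 0 := hynz (p + 1)
        simp only [div_pow]
        field_simp
        ring
  -- conclude
  obtain ⟨h', rfl⟩ : ∃ h', h = h' + 1 := ⟨h - 1, by omega⟩
  obtain ⟨m, hm⟩ := hdvd
  obtain ⟨m', rfl⟩ : ∃ m', m = m' + 1 := by
    refine ⟨m - 1, ?_⟩
    rcases Nat.eq_zero_or_pos m with h0 | h0
    · subst h0; omega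
    · omega
  have hkq : k = (m' + 1) * q + 1 := by
    have h1 : q * (m' + 1) = (m' + 1) * q := by ring
    omega
  subst hkq
  have e0 : (m' + 1) * q + 1 - 1 = (m' + 1) * q := by omega
  have e1 : ((m' + 1) * q) / q = m' + 1 := Nat.mul_div_cancel _ (by omega)
  have e2 : (m' + 1) * q + 1 - r = m' * q := by
    have h1 : (m' + 1) * q = m' * q + q := by ring
    omega
  have e3 : (m' * q) / q = m' := Nat.mul_div_cancel _ (by omega)
  rw [e0, e1, e2, e3, aux h' (m' + 1) (by omega)]
  simp only [Nat.add_sub_cancel]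
  congr 1
  rw [prod_Icc_one_eq_range]
  refine Finset.prod_congr rfl ?_
  intro i _
  simp only [Nat.add_sub_cancel]
  rw [hydef, ← pow_mul, ← pow_mul, ← pow_mul, mul_comm q (h' + 1), mul_comm q i,
    mul_comm q (i + 1)]
end

section
/- Fix integers d ≥ 2, 2 ≤ r ≤ d, and k ≥ 2 with (r-1) | (k-1). With c(F^r_k, CD^d_h) given by the explicit product formula C(d,r)^{(k-1)/(r-1)}·(r/d)^{(k-r)/(r-1)}·d^{h-1}·∏_{i=1}^{(k-1)/(r-1)} (d^{h(r-1)} - d^{(i-1)(r-1)})/(d^{i(r-1)} - 1), the limit as h → ∞ of c(F^r_k, CD^d_h)·k!·(d^h choose k)^{-1} — i.e. the density of F^r_k in CD^d_h — equals (k!/d)·C(d,r)^{(k-1)/(r-1)}·(r/d)^{(k-r)/(r-1)}·∏_{j=1}^{(k-1)/(r-1)} (d^{(r-1)j} - 1)^{-1}. -/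
open Filter Topology Finset

lemma choose_cast_prod (n k : ℕ) (h : k ≤ n) :
    (n.choose k : ℝ) = (∏ j ∈ range k, ((n : ℝ) - j)) / (Nat.factorial k) := by
  rw [eq_div_iff (by exact_mod_cast (Nat.factorial_pos k).ne')]
  have hp : ∏ j ∈ range k, ((n : ℝ) - j) = ((n.descFactorial k : ℕ) : ℝ) := by
    rw [Nat.descFactorial_eq_prod_range, Nat.cast_prod]
    refine Finset.prod_congr rfl fun j hj => ?_
    rw [Nat.cast_sub (le_trans (le_of_lt (mem_range.1 hj)) h)]
  rw [hp, Nat.descFactorial_eq_factorial_mul_choose]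
  push_cast
  ring

theorem density_limit_rary_caterpillar (d r k : ℕ) (hd : 2 ≤ d) (hr2 : 2 ≤ r)
    (hrd : r ≤ d) (hk : 2 ≤ k) (hdvd : (r - 1) ∣ (k - 1)) :
    Tendsto (fun h : ℕ =>
        ((d.choose r : ℝ) ^ ((k - 1) / (r - 1)) * ((r : ℝ) / (d : ℝ)) ^ ((k - r) / (r - 1))
            * (d : ℝ) ^ (h - 1) *
            ∏ i ∈ Finset.Icc 1 ((k - 1) / (r - 1)),
              ((d : ℝ) ^ (h * (r - 1)) - (d : ℝ) ^ ((i - 1) * (r - 1)))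
                / ((d : ℝ) ^ (i * (r - 1)) - 1))
          / ((d ^ h).choose k : ℝ))
      atTop
      (nhds ((Nat.factorial k : ℝ) / (d : ℝ) * (d.choose r : ℝ) ^ ((k - 1) / (r - 1))
        * ((r : ℝ) / (d : ℝ)) ^ ((k - r) / (r - 1))
        * ∏ j ∈ Finset.Icc 1 ((k - 1) / (r - 1)), ((d : ℝ) ^ ((r - 1) * j) - 1)⁻¹)) := by
  set s := r - 1 with hs_def
  set m := (k - 1) / (r - 1) with hm_def
  have hs1 : 1 ≤ s := by omega
  have hms : m * s = k - 1 := Nat.div_mul_cancel hdvd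
  have hd1 : (1:ℝ) < (d:ℝ) := by exact_mod_cast hd.trans_lt' one_lt_two
  have hd0 : (0:ℝ) < (d:ℝ) := by linarith
  set C : ℝ := (d.choose r : ℝ) ^ m * ((r : ℝ) / (d : ℝ)) ^ ((k - r) / (r - 1)) with hC_def
  set L : ℝ := (Nat.factorial k : ℝ) / (d : ℝ) * (d.choose r : ℝ) ^ m
      * ((r : ℝ) / (d : ℝ)) ^ ((k - r) / (r - 1))
      * ∏ j ∈ Finset.Icc 1 m, ((d : ℝ) ^ ((r-1) * j) - 1)⁻¹ with hL_def
  set N : ℕ → ℝ := fun h => ∏ i ∈ Finset.Icc 1 m,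
      (1 - (d:ℝ) ^ ((i - 1) * s) / (d:ℝ) ^ (h * s)) with hN_def
  set D : ℕ → ℝ := fun h => ∏ j ∈ range k, (1 - (j:ℝ) / (d:ℝ) ^ h) with hD_def
  -- limits
  have hpow : ∀ (e : ℕ), 1 ≤ e → Tendsto (fun h : ℕ => (d:ℝ) ^ (h * e)) atTop atTop := by
    intro e he
    have h1 : (1:ℝ) < (d:ℝ) ^ e := one_lt_pow₀ hd1 (by omega)
    have := tendsto_pow_atTop_atTop_of_one_lt h1
    refine this.congr fun h => ?_
    rw [← pow_mul, mul_comm]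
  have hN1 : Tendsto N atTop (nhds 1) := by
    have : Tendsto N atTop (nhds (∏ i ∈ Finset.Icc 1 m, (1:ℝ))) := by
      refine tendsto_finset_prod _ fun i _ => ?_
      have h0 : Tendsto (fun h : ℕ => (d:ℝ) ^ ((i-1)*s) / (d:ℝ) ^ (h * s)) atTop (nhds 0) :=
        Tendsto.div_atTop tendsto_const_nhds (hpow s hs1)
      have := ((tendsto_const_nhds : Tendsto (fun _ : ℕ => (1:ℝ)) atTop (nhds 1)).sub h0)
      simpa using this
    simpa using this
  have hD1 : Tendsto D atTop (nhds 1) := by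
    have : Tendsto D atTop (nhds (∏ j ∈ range k, (1:ℝ))) := by
      refine tendsto_finset_prod _ fun j _ => ?_
      have h0 : Tendsto (fun h : ℕ => (j:ℝ) / (d:ℝ) ^ h) atTop (nhds 0) := by
        refine Tendsto.div_atTop tendsto_const_nhds ?_
        simpa using hpow 1 le_rfl
      have := ((tendsto_const_nhds : Tendsto (fun _ : ℕ => (1:ℝ)) atTop (nhds 1)).sub h0)
      simpa using this
    simpa using this
  have hlim : Tendsto (fun h => L * N h / D h) atTop (nhds L) := by
    have := ((tendsto_const_nhds : Tendsto (fun _ : ℕ => L) atTop (nhds L)).mul hN1).div hD1 one_ne_zero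
    simpa only [mul_one, div_one, Pi.div_def] using this
  refine Tendsto.congr' ?_ hlim
  -- eventual equality
  have hdx : Tendsto (fun h : ℕ => d ^ h) atTop atTop :=
    tendsto_pow_atTop_atTop_of_one_lt (by omega)
  filter_upwards [eventually_ge_atTop 1, hdx.eventually_ge_atTop k] with h h1 hkx
  -- nonzeroness facts
  have hxpos : (0:ℝ) < (d:ℝ) ^ h := pow_pos hd0 h
  have hBpos : ∀ i ∈ Finset.Icc 1 m, (0:ℝ) < (d:ℝ) ^ (i * s) - 1 := by
    intro i hi
    have hi1 : 1 ≤ i := (Finset.mem_Icc.1 hi).1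
    have : (1:ℝ) < (d:ℝ) ^ (i * s) := one_lt_pow₀ hd1 (by positivity)
    linarith
  have hBne : (∏ i ∈ Finset.Icc 1 m, ((d:ℝ) ^ (i * s) - 1)) ≠ 0 :=
    Finset.prod_ne_zero_iff.2 fun i hi => (hBpos i hi).ne'
  have hDne : D h ≠ 0 := by
    refine Finset.prod_ne_zero_iff.2 fun j hj => ?_
    have hjk : (j:ℝ) < (d:ℝ)^h := by
      have : j < d ^ h := lt_of_lt_of_le (mem_range.1 hj) hkx
      calc (j:ℝ) < ((d^h : ℕ) : ℝ) := by exact_mod_cast this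
        _ = (d:ℝ)^h := by push_cast; ring
    have : (j:ℝ)/(d:ℝ)^h < 1 := (div_lt_one hxpos).2 hjk
    intro hc
    rw [sub_eq_zero] at hc
    exact absurd hc.symm this.ne
  -- rewrite choose
  rw [choose_cast_prod _ _ (by exact_mod_cast hkx)]
  -- product identities
  have hA : ∏ i ∈ Finset.Icc 1 m, ((d:ℝ)^(h*s) - (d:ℝ)^((i-1)*s))
      = ((d:ℝ)^(h*s))^m * N h := by
    have hy : (0:ℝ) < (d:ℝ)^(h*s) := pow_pos hd0 _
    have he : ∀ i ∈ Finset.Icc 1 m, (d:ℝ)^(h*s) - (d:ℝ)^((i-1)*s)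
        = (d:ℝ)^(h*s) * (1 - (d:ℝ)^((i-1)*s)/(d:ℝ)^(h*s)) := fun i _ => by field_simp
    rw [Finset.prod_congr rfl he, Finset.prod_mul_distrib, Finset.prod_const, Nat.card_Icc]
    simp [hN_def]
  have hP : ∏ j ∈ range k, ((d:ℝ)^h - (j:ℝ)) = ((d:ℝ)^h)^k * D h := by
    have he : ∀ j ∈ range k, (d:ℝ)^h - (j:ℝ)
        = (d:ℝ)^h * (1 - (j:ℝ)/(d:ℝ)^h) := fun j _ => by field_simp
    rw [Finset.prod_congr rfl he, Finset.prod_mul_distrib, Finset.prod_const, card_range]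
  push_cast
  rw [Finset.prod_div_distrib, hA, hP]
  have hPinv : ∏ j ∈ Finset.Icc 1 m, ((d:ℝ)^((r-1)*j) - 1)⁻¹
      = (∏ i ∈ Finset.Icc 1 m, ((d:ℝ)^(i*s) - 1))⁻¹ := by
    rw [← Finset.prod_inv_distrib]
    exact Finset.prod_congr rfl fun j _ => by rw [Nat.mul_comm]
  rw [hL_def, hPinv]
  have hexp : (h - 1) + h * s * m + 1 = h * k := by
    have h2 : h * s * m = h * (k-1) := by rw [Nat.mul_assoc, mul_comm s m, hms]
    have h3 : h * k = h * (k-1) + h := by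
      have : k - 1 + 1 = k := by omega
      rw [← this, Nat.mul_succ, this]
    rw [h2, h3]
    omega
  have hdpow : ((d:ℝ)^h)^k = (d:ℝ)^(h-1) * ((d:ℝ)^(h*s))^m * (d:ℝ) := by
    rw [← pow_mul, ← pow_mul, ← hexp]; ring
  rw [hdpow]
  have hkf : (Nat.factorial k : ℝ) ≠ 0 := by exact_mod_cast (Nat.factorial_pos k).ne'
  have hyne : ((d:ℝ)^(h*s))^m ≠ 0 := by positivity
  rw [hC_def]
  field_simp
end

section
/- Fix integers d ≥ 2 and k ≥ 3, and set b_k = (1/2)·(d-1)^{k-1}·∏_{j=1}^{k-1}(d^j-1)^{-1}. Suppose a function c on strictly d-ary trees satisfies the recursion c(T) = ∑_{i=1}^d c(T_i) + ∑_{i≠j} |T_i|·c_{k-1}(T_j) where T_1,...,T_d are the branches of T, with analogous recursions down to the base count c_2(T) = C(|T|,2). Then c(T) ≥ b_k·n^k − n^{k-1}/(k-1)! for every strictly d-ary tree T with n leaves. -/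
open Finset


/-- Strictly `d`-ary trees: every internal vertex has exactly `d` children. -/
inductive StrictDaryTree (d : ℕ) : Type
  | leaf : StrictDaryTree d
  | node : (Fin d → StrictDaryTree d) → StrictDaryTree d

/-- The number of leaves of a strictly `d`-ary tree. -/
def StrictDaryTree.leaves {d : ℕ} : StrictDaryTree d → ℕ
  | .leaf => 1
  | .node b => ∑ i, (b i).leaves

namespace CatAux

variable {d : ℕ}

lemma sum_offdiag_eq (F : Fin d → Fin d → ℝ) :
    ∑ p ∈ Finset.univ.filter (fun p : Fin d × Fin d => p.1 ≠ p.2), F p.1 p.2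
      = (∑ i, ∑ j, F i j) - ∑ i, F i i := by
  classical
  have hdiag : ∑ p ∈ Finset.univ.filter (fun p : Fin d × Fin d => ¬ p.1 ≠ p.2), F p.1 p.2
      = ∑ i, F i i := by
    have himg : Finset.univ.filter (fun p : Fin d × Fin d => ¬ p.1 ≠ p.2)
        = Finset.univ.image (fun i : Fin d => (i, i)) := by
      ext p
      simp only [Finset.mem_filter, Finset.mem_univ, true_and, not_not, Finset.mem_image]
      constructor
      · intro h
        refine ⟨p.1, ?_⟩
        rw [h]
        exact Prod.ext h.symm rfl
      · rintro ⟨i, rfl⟩; rfl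
    rw [himg, Finset.sum_image]
    intro x _ y _ h
    exact congrArg Prod.fst h
  have htot : ∑ p : Fin d × Fin d, F p.1 p.2 = ∑ i, ∑ j, F i j := by
    rw [← Finset.univ_product_univ, Finset.sum_product]
  have h := Finset.sum_filter_add_sum_filter_not (Finset.univ : Finset (Fin d × Fin d))
      (fun p => p.1 ≠ p.2) (fun p => F p.1 p.2)
  rw [hdiag, htot] at h
  linarith

lemma sum_offdiag_mul (f g : Fin d → ℝ) :
    ∑ p ∈ Finset.univ.filter (fun p : Fin d × Fin d => p.1 ≠ p.2), f p.1 * g p.2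
      = (∑ i, f i) * (∑ j, g j) - ∑ i, f i * g i := by
  rw [sum_offdiag_eq (fun i j => f i * g j)]
  congr 1
  rw [Finset.sum_mul_sum]

lemma sum_w_eq (n : Fin d → ℝ) (s : ℕ) :
    ∑ j, n j ^ s * ((∑ i, n i) - n j)
      = (∑ i, n i) * (∑ i, n i ^ s) - ∑ i, n i ^ (s+1) := by
  have h : ∀ j : Fin d, n j ^ s * ((∑ i, n i) - n j)
      = (∑ i, n i) * n j ^ s - n j ^ (s+1) := fun j => by ring
  rw [Finset.sum_congr rfl fun j _ => h j, Finset.sum_sub_distrib, ← Finset.mul_sum]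

lemma pair_le_sum (n : Fin d → ℝ) (hn : ∀ i, 0 ≤ n i) {i j : Fin d} (h : i ≠ j) :
    n i + n j ≤ ∑ l, n l := by
  have hs := Finset.sum_le_sum_of_subset_of_nonneg (Finset.subset_univ ({i, j} : Finset (Fin d)))
    (fun l _ _ => hn l)
  rwa [Finset.sum_pair h] at hs

lemma lemA (n : Fin d → ℝ) (hn : ∀ i, 0 ≤ n i) (t : ℕ) :
    (∑ i, n i) * ((∑ i, n i) * (∑ i, n i ^ (t+1)) - ∑ i, n i ^ (t+2))
      ≤ (d : ℝ) * ((∑ i, n i) * (∑ i, n i ^ (t+2)) - ∑ i, n i ^ (t+3)) := by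
  set S := ∑ i, n i with hS
  set w : Fin d → ℝ := fun j => n j ^ (t+1) * (S - n j) with hw
  have hmono : Monovary w n := by
    intro i j hij
    have hne : i ≠ j := by rintro rfl; exact lt_irrefl _ hij
    have hpair : n i + n j ≤ S := pair_le_sum n hn hne
    have h1 : n i ^ t ≤ n j ^ t := pow_le_pow_left₀ (hn i) hij.le t
    have h2 : n i * (S - n i) ≤ n j * (S - n j) := by nlinarith [hn i, hn j]
    have h3 : 0 ≤ n i * (S - n i) := mul_nonneg (hn i) (by linarith [hn j])
    calc w i = n i ^ t * (n i * (S - n i)) := by simp only [hw]; ring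
    _ ≤ n j ^ t * (n j * (S - n j)) := mul_le_mul h1 h2 h3 (pow_nonneg (hn j) t)
    _ = w j := by simp only [hw]; ring
  have cheb := hmono.sum_mul_sum_le_card_mul_sum
  rw [Fintype.card_fin] at cheb
  have e1 : ∑ j, w j = S * (∑ i, n i ^ (t+1)) - ∑ i, n i ^ (t+2) := sum_w_eq n (t+1)
  have e2 : ∑ j, w j * n j = S * (∑ i, n i ^ (t+2)) - ∑ i, n i ^ (t+3) := by
    have h : ∀ j : Fin d, w j * n j = n j ^ (t+2) * (S - n j) := fun j => by
      simp only [hw]; ring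
    rw [Finset.sum_congr rfl fun j _ => h j]
    exact sum_w_eq n (t+2)
  rw [e1, e2] at cheb
  calc S * (S * (∑ i, n i ^ (t+1)) - ∑ i, n i ^ (t+2))
      = (S * (∑ i, n i ^ (t+1)) - ∑ i, n i ^ (t+2)) * S := by ring
  _ ≤ (d : ℝ) * (S * (∑ i, n i ^ (t+2)) - ∑ i, n i ^ (t+3)) := cheb

lemma lemB (n : Fin d → ℝ) (hn : ∀ i, 0 ≤ n i) (m : ℕ) :
    (∑ i, n i) ^ (m+2) ≤ (∑ i, n i ^ (m+2))
      + (∑ u ∈ Finset.range (m+1), (d:ℝ)^u)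
        * ((∑ i, n i) * (∑ i, n i ^ (m+1)) - ∑ i, n i ^ (m+2)) := by
  induction m with
  | zero =>
    have hP1 : ∑ i, n i ^ (0+1) = ∑ i, n i := by simp
    have hgeo : ∑ u ∈ Finset.range (0+1), (d:ℝ)^u = 1 := by simp
    have he : (∑ i, n i) ^ (0+2) = (∑ i, n i) * (∑ i, n i) := by ring
    rw [hgeo, hP1, one_mul, he]
    linarith
  | succ m ih =>
    have hS : 0 ≤ ∑ i, n i := Finset.sum_nonneg fun i _ => hn i
    have hR : 0 ≤ ∑ u ∈ Finset.range (m+1), (d:ℝ)^u :=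
      Finset.sum_nonneg fun u _ => pow_nonneg (Nat.cast_nonneg d) u
    have step1 := mul_le_mul_of_nonneg_left ih hS
    have hA := mul_le_mul_of_nonneg_left (lemA n hn m) hR
    rw [geom_sum_succ]
    have hpow : (∑ i, n i) ^ (m+1+2) = (∑ i, n i) * (∑ i, n i)^(m+2) := by ring
    rw [hpow]
    nlinarith [step1, hA]

lemma lemC (n : Fin d → ℝ) (hn : ∀ i, 0 ≤ n i) (q : ℕ) (hq : 2 ≤ q) :
    (∑ i, n i ^ (q+1)) + ((q:ℝ)+1) * ((∑ i, n i) * (∑ i, n i ^ q) - ∑ i, n i ^ (q+1))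
      ≤ (∑ i, n i) ^ (q+1) := by
  induction q, hq using Nat.le_induction with
  | base =>
    set S := ∑ i, n i with hS
    have key : (0:ℝ) ≤ ∑ p ∈ Finset.univ.filter (fun p : Fin d × Fin d => p.1 ≠ p.2),
        n p.1 * n p.2 * (S - n p.1 - n p.2) := by
      apply Finset.sum_nonneg
      intro p hp
      have hne : p.1 ≠ p.2 := (Finset.mem_filter.mp hp).2
      have hps : n p.1 + n p.2 ≤ S := pair_le_sum n hn hne
      exact mul_nonneg (mul_nonneg (hn p.1) (hn p.2)) (by linarith)
    have expand : ∑ p ∈ Finset.univ.filter (fun p : Fin d × Fin d => p.1 ≠ p.2),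
        n p.1 * n p.2 * (S - n p.1 - n p.2)
        = S^3 - 3*S*(∑ i, n i ^ 2) + 2*(∑ i, n i ^ 3) := by
      rw [sum_offdiag_eq (fun i j => n i * n j * (S - n i - n j))]
      have inner : ∀ i : Fin d, ∑ j, n i * n j * (S - n i - n j)
          = n i * S * S - n i^2 * S - n i * (∑ j, n j ^ 2) := by
        intro i
        have h : ∀ j : Fin d, n i * n j * (S - n i - n j)
            = (n i * S) * n j - n i ^ 2 * n j - n i * n j ^ 2 := fun j => by ring
        rw [Finset.sum_congr rfl fun j _ => h j, Finset.sum_sub_distrib,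
          Finset.sum_sub_distrib, ← Finset.mul_sum, ← Finset.mul_sum, ← Finset.mul_sum]
      rw [Finset.sum_congr rfl fun i _ => inner i]
      have hdiag : ∀ i : Fin d, n i * n i * (S - n i - n i)
          = S * n i ^ 2 - 2 * n i ^ 3 := fun i => by ring
      rw [Finset.sum_congr rfl fun i _ => hdiag i]
      simp only [Finset.sum_sub_distrib, ← Finset.sum_mul, ← Finset.mul_sum]
      ring
    norm_num
    linarith [key, expand]
  | succ q hq ih =>
    set S := ∑ i, n i with hS
    have hS0 : 0 ≤ S := Finset.sum_nonneg fun i _ => hn i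
    have sqid : 0 ≤ S^2 * (∑ i, n i ^ q) + (∑ i, n i ^ (q+2)) - 2*S*(∑ i, n i ^ (q+1)) := by
      have h : ∀ j : Fin d, n j ^ q * (S - n j)^2
          = S^2 * n j ^ q + n j ^ (q+2) - 2*S* n j ^ (q+1) := fun j => by ring
      have h2 : (0:ℝ) ≤ ∑ j, n j ^ q * (S - n j)^2 :=
        Finset.sum_nonneg fun j _ => mul_nonneg (pow_nonneg (hn j) q) (sq_nonneg _)
      rw [Finset.sum_congr rfl fun j _ => h j, Finset.sum_sub_distrib,
        Finset.sum_add_distrib, ← Finset.mul_sum, ← Finset.mul_sum] at h2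
      linarith [h2]
    have step1 := mul_le_mul_of_nonneg_left ih hS0
    have hpow : S ^ (q+1+1) = S * S^(q+1) := by ring
    push_cast
    rw [hpow]
    nlinarith [step1, sqid, mul_nonneg (show (0:ℝ) ≤ (q:ℝ)+1 by positivity) sqid]



noncomputable def Bc (d m : ℕ) : ℝ :=
  (1/2 : ℝ) * ((d:ℝ) - 1)^(m-1) * ∏ j ∈ Finset.Icc 1 (m-1), ((d:ℝ)^j - 1)⁻¹

noncomputable def Ec (m : ℕ) : ℝ :=
  if m = 2 then (1/2 : ℝ) else (((m-1).factorial : ℕ) : ℝ)⁻¹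

lemma hd_real (hd : 2 ≤ d) : (1:ℝ) < (d:ℝ) := by
  have : (2:ℝ) ≤ (d:ℝ) := by exact_mod_cast hd
  linarith

lemma dpow_pos (hd : 2 ≤ d) {j : ℕ} (hj : 1 ≤ j) : (0:ℝ) < (d:ℝ)^j - 1 := by
  have h1 := hd_real hd
  have := one_lt_pow₀ h1 (by omega : j ≠ 0)
  linarith

lemma Bc_nonneg (hd : 2 ≤ d) (m : ℕ) : 0 ≤ Bc d m := by
  unfold Bc
  have h1 : (0:ℝ) ≤ (d:ℝ) - 1 := by have := hd_real hd; linarith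
  refine mul_nonneg (mul_nonneg (by norm_num) (pow_nonneg h1 _)) ?_
  refine Finset.prod_nonneg fun j hj => ?_
  exact inv_nonneg.mpr (le_of_lt (dpow_pos hd (Finset.mem_Icc.mp hj).1))

lemma Bc_geom (hd : 2 ≤ d) (t : ℕ) :
    Bc d (t+2) * (∑ u ∈ Finset.range (t+1), (d:ℝ)^u) = Bc d (t+1) := by
  have hg : (∑ u ∈ Finset.range (t+1), (d:ℝ)^u) * ((d:ℝ) - 1) = (d:ℝ)^(t+1) - 1 :=
    geom_sum_mul _ _
  have hne : (d:ℝ)^(t+1) - 1 ≠ 0 := ne_of_gt (dpow_pos hd (Nat.succ_le_succ (Nat.zero_le t)))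
  unfold Bc
  have e1 : t+2-1 = t+1 := by omega
  have e2 : t+1-1 = t := by omega
  rw [e1, e2, Finset.prod_Icc_succ_top (Nat.le_add_left 1 t)]
  have key : ((d:ℝ)-1) * ((d:ℝ)^(t+1)-1)⁻¹ * (∑ u ∈ Finset.range (t+1), (d:ℝ)^u) = 1 := by
    rw [show ((d:ℝ)-1) * ((d:ℝ)^(t+1)-1)⁻¹ * (∑ u ∈ Finset.range (t+1), (d:ℝ)^u)
      = ((∑ u ∈ Finset.range (t+1), (d:ℝ)^u) * ((d:ℝ)-1)) * ((d:ℝ)^(t+1)-1)⁻¹ from by ring, hg]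
    exact mul_inv_cancel₀ hne
  linear_combination ((1/2:ℝ) * ((d:ℝ)-1)^t * ∏ j ∈ Finset.Icc 1 t, ((d:ℝ)^j-1)⁻¹) * key


lemma real_lb (hd : 2 ≤ d) : ∀ j : ℕ, (j:ℝ) * ((d:ℝ)-1) + 1 ≤ (d:ℝ)^j := by
  intro j
  induction j with
  | zero => simp
  | succ j ih =>
    have hD := hd_real hd
    have hpow : (1:ℝ) ≤ (d:ℝ)^j := one_le_pow₀ hD.le
    have h2 : (d:ℝ)^(j+1) = (d:ℝ)^j * (d:ℝ) := pow_succ _ _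
    push_cast
    nlinarith [ih, hpow, hD, mul_nonneg (sub_nonneg.2 hpow) (sub_nonneg.2 hD.le)]

lemma prod_le_inv_fact (hd : 2 ≤ d) :
    ∀ s : ℕ, ((d:ℝ)-1)^s * ∏ j ∈ Finset.Icc 1 s, ((d:ℝ)^j - 1)⁻¹
      ≤ ((s.factorial : ℕ):ℝ)⁻¹ := by
  intro s
  induction s with
  | zero => simp
  | succ s ih =>
    rw [Finset.prod_Icc_succ_top (Nat.le_add_left 1 s)]
    have hpos : (0:ℝ) < (d:ℝ)^(s+1) - 1 := dpow_pos hd (by omega)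
    have hfb : ((d:ℝ)-1) * ((d:ℝ)^(s+1)-1)⁻¹ ≤ ((s:ℝ)+1)⁻¹ := by
      have hlb := real_lb hd (s+1)
      rw [← div_eq_mul_inv, ← one_div ((s:ℝ)+1), div_le_div_iff₀ hpos (by positivity)]
      push_cast at hlb ⊢
      nlinarith [hlb]
    have hnn1 : (0:ℝ) ≤ ((d:ℝ)-1) * ((d:ℝ)^(s+1)-1)⁻¹ := by
      have h1 := hd_real hd
      exact mul_nonneg (by linarith) (inv_nonneg.mpr hpos.le)
    have hnn2 : (0:ℝ) ≤ ((s.factorial : ℕ):ℝ)⁻¹ := by positivity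
    calc ((d:ℝ)-1)^(s+1) * ((∏ j ∈ Finset.Icc 1 s, ((d:ℝ)^j - 1)⁻¹) * ((d:ℝ)^(s+1)-1)⁻¹)
        = (((d:ℝ)-1)^s * ∏ j ∈ Finset.Icc 1 s, ((d:ℝ)^j - 1)⁻¹)
          * (((d:ℝ)-1) * ((d:ℝ)^(s+1)-1)⁻¹) := by ring
    _ ≤ ((s.factorial : ℕ):ℝ)⁻¹ * ((s:ℝ)+1)⁻¹ := mul_le_mul ih hfb hnn1 hnn2
    _ = (((s+1).factorial : ℕ):ℝ)⁻¹ := by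
        rw [Nat.factorial_succ]
        push_cast
        rw [mul_inv]
        ring

lemma Bc_le_Ec (hd : 2 ≤ d) (t : ℕ) : Bc d (t+3) ≤ Ec (t+3) := by
  unfold Bc Ec
  have e1 : t+3-1 = t+2 := by omega
  rw [e1, if_neg (by omega : ¬ t+3 = 2)]
  have h := prod_le_inv_fact hd (t+2)
  have hnn : (0:ℝ) ≤ ((d:ℝ)-1)^(t+2) * ∏ j ∈ Finset.Icc 1 (t+2), ((d:ℝ)^j - 1)⁻¹ := by
    have h1 : (0:ℝ) ≤ (d:ℝ) - 1 := by have := hd_real hd; linarith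
    refine mul_nonneg (pow_nonneg h1 _) (Finset.prod_nonneg fun j hj => ?_)
    exact inv_nonneg.mpr (le_of_lt (dpow_pos hd (Finset.mem_Icc.mp hj).1))
  have hnn2 : (0:ℝ) ≤ (((t+2).factorial : ℕ):ℝ)⁻¹ := by positivity
  nlinarith [h, hnn, hnn2]

lemma errE (n : Fin d → ℝ) (hn : ∀ i, 0 ≤ n i) (t : ℕ) :
    Ec (t+2) * ((∑ i, n i) * (∑ i, n i ^ (t+1)) - ∑ i, n i ^ (t+2))
      + Ec (t+3) * (∑ i, n i ^ (t+2))
      ≤ Ec (t+3) * (∑ i, n i) ^ (t+2) := by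
  match t with
  | 0 =>
    have h2 : Ec 2 = 1/2 := by simp [Ec]
    have h3 : Ec 3 = 1/2 := by norm_num [Ec, Nat.factorial]
    have hP1 : ∑ i, n i ^ (0+1) = ∑ i, n i := by simp
    rw [h2, h3, hP1, show ((∑ i, n i)^(0+2) = (∑ i, n i) * (∑ i, n i)) from by ring]
    linarith
  | (s+1) =>
    have e2 : s+1+2-1 = s+2 := by omega
    have e3 : s+1+3-1 = s+3 := by omega
    have h2 : Ec (s+1+2) = (((s+2).factorial : ℕ):ℝ)⁻¹ := by
      simp only [Ec, e2, if_neg (show ¬ s+1+2 = 2 by omega)]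
    have h3 : Ec (s+1+3) = (((s+3).factorial : ℕ):ℝ)⁻¹ := by
      simp only [Ec, e3, if_neg (show ¬ s+1+3 = 2 by omega)]
    have hC : (∑ i, n i ^ (s+3)) + (((s+2:ℕ):ℝ)+1) * ((∑ i, n i) * (∑ i, n i ^ (s+2)) - ∑ i, n i ^ (s+3))
        ≤ (∑ i, n i) ^ (s+3) := lemC n hn (s+2) (by omega)
    push_cast at hC
    have hc0 : (0:ℝ) ≤ (((s+3).factorial : ℕ):ℝ)⁻¹ := by positivity
    have h := mul_le_mul_of_nonneg_left hC hc0
    have hkey : (((s+3).factorial : ℕ):ℝ)⁻¹ * ((s:ℝ)+3) = (((s+2).factorial:ℕ):ℝ)⁻¹ := by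
      have hfac : (((s+3).factorial : ℕ):ℝ) = ((s:ℝ)+3) * (((s+2).factorial : ℕ):ℝ) := by
        rw [show s+3 = (s+2)+1 from rfl, Nat.factorial_succ]
        push_cast
        ring
      have hfpos : (0:ℝ) < (((s+2).factorial : ℕ):ℝ) := by positivity
      rw [hfac, mul_inv]
      field_simp
    rw [h2, h3]
    have goal2 : (((s+3).factorial : ℕ):ℝ)⁻¹ * ((s:ℝ)+3)
        * ((∑ i, n i) * (∑ i, n i ^ (s+1+1)) - ∑ i, n i ^ (s+1+2))
        + (((s+3).factorial : ℕ):ℝ)⁻¹ * (∑ i, n i ^ (s+1+2))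
        ≤ (((s+3).factorial : ℕ):ℝ)⁻¹ * (∑ i, n i) ^ (s+1+2) := by
      have ha : (∑ i, n i ^ (s+1+1)) = ∑ i, n i ^ (s+2) := by norm_num
      have hb : (∑ i, n i ^ (s+1+2)) = ∑ i, n i ^ (s+3) := by norm_num
      have hcp : ((∑ i, n i) ^ (s+1+2) : ℝ) = (∑ i, n i) ^ (s+3) := by norm_num
      rw [ha, hb, hcp]
      nlinarith [h]
    rw [← hkey]
    exact goal2

end CatAux


theorem caterpillar_count_lower_bound (d k : ℕ) (hd : 2 ≤ d) (hk : 3 ≤ k)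
    (c : ℕ → StrictDaryTree d → ℝ)
    (hbase2 : ∀ T : StrictDaryTree d, c 2 T = ((T.leaves).choose 2 : ℝ))
    (hleaf : ∀ m : ℕ, 3 ≤ m → c m .leaf = 0)
    (hrec : ∀ m : ℕ, 3 ≤ m → ∀ b : Fin d → StrictDaryTree d,
      c m (.node b) = (∑ i, c m (b i))
        + ∑ p ∈ Finset.univ.filter (fun p : Fin d × Fin d => p.1 ≠ p.2),
            ((b p.1).leaves : ℝ) * c (m - 1) (b p.2)) :
    ∀ T : StrictDaryTree d,
      c k T ≥ ((1 / 2 : ℝ) * ((d : ℝ) - 1) ^ (k - 1) *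
          ∏ j ∈ Finset.Icc 1 (k - 1), ((d : ℝ) ^ j - 1)⁻¹) * (T.leaves : ℝ) ^ k
        - (T.leaves : ℝ) ^ (k - 1) / (Nat.factorial (k - 1) : ℝ) := by
  classical
  have main : ∀ t : ℕ, ∀ T : StrictDaryTree d,
      CatAux.Bc d (t+2) * ((T.leaves : ℝ))^(t+2) - CatAux.Ec (t+2) * ((T.leaves : ℝ))^(t+1)
        ≤ c (t+2) T := by
    intro t
    induction t with
    | zero =>
      intro T
      have hB2 : CatAux.Bc d 2 = 1/2 := by
        unfold CatAux.Bc
        norm_num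
        have hne : ((d:ℝ) - 1) ≠ 0 := by have := CatAux.hd_real hd; linarith
        field_simp
      have hE2 : CatAux.Ec 2 = 1/2 := by simp [CatAux.Ec]
      have H : CatAux.Bc d 2 * ((T.leaves : ℝ))^2 - CatAux.Ec 2 * ((T.leaves : ℝ))^1
          ≤ c 2 T := by
        rw [hbase2 T, Nat.cast_choose_two, hB2, hE2]
        have : ((T.leaves:ℝ) * ((T.leaves:ℝ) - 1)) / 2
            = (1/2)*(T.leaves:ℝ)^2 - (1/2)*(T.leaves:ℝ)^1 := by ring
        rw [this]
      exact H
    | succ t ih =>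
      intro T
      induction T with
      | leaf =>
        have H : CatAux.Bc d (t+3) * ((StrictDaryTree.leaf : StrictDaryTree d).leaves : ℝ)^(t+3)
            - CatAux.Ec (t+3) * ((StrictDaryTree.leaf : StrictDaryTree d).leaves : ℝ)^(t+2)
            ≤ c (t+3) (StrictDaryTree.leaf : StrictDaryTree d) := by
          rw [hleaf (t+3) (by omega)]
          have hl : ((StrictDaryTree.leaf : StrictDaryTree d).leaves : ℝ) = 1 := by
            simp [StrictDaryTree.leaves]
          rw [hl]
          have := CatAux.Bc_le_Ec hd t
          simp only [one_pow, mul_one]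
          linarith
        exact H
      | node b ihb =>
        set n : Fin d → ℝ := fun i => (((b i).leaves : ℕ) : ℝ) with hns
        have hn : ∀ i, 0 ≤ n i := fun i => Nat.cast_nonneg _
        have hLS : (((StrictDaryTree.node b).leaves : ℕ) : ℝ) = ∑ i, n i := by
          simp [StrictDaryTree.leaves, hns]
        have hrec3 : c (t+3) (StrictDaryTree.node b)
            = (∑ i, c (t+3) (b i))
              + ∑ p ∈ Finset.univ.filter (fun p : Fin d × Fin d => p.1 ≠ p.2),
                  n p.1 * c (t+2) (b p.2) := by
          have h := hrec (t+3) (by omega) b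
          have e : t+3-1 = t+2 := by omega
          rw [e] at h
          exact h
        have hsum1 : CatAux.Bc d (t+3) * (∑ i, n i ^ (t+3))
            - CatAux.Ec (t+3) * (∑ i, n i ^ (t+2)) ≤ ∑ i, c (t+3) (b i) := by
          have h : ∑ i, (CatAux.Bc d (t+3) * n i ^ (t+3) - CatAux.Ec (t+3) * n i ^ (t+2))
              ≤ ∑ i, c (t+3) (b i) := Finset.sum_le_sum (fun i _ => ihb i)
          rw [Finset.sum_sub_distrib, ← Finset.mul_sum, ← Finset.mul_sum] at h
          exact h
        set g : Fin d → ℝ :=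
          fun j => CatAux.Bc d (t+2) * n j ^ (t+2) - CatAux.Ec (t+2) * n j ^ (t+1) with hg
        have hsum2 : ∑ p ∈ Finset.univ.filter (fun p : Fin d × Fin d => p.1 ≠ p.2), n p.1 * g p.2
            ≤ ∑ p ∈ Finset.univ.filter (fun p : Fin d × Fin d => p.1 ≠ p.2),
                n p.1 * c (t+2) (b p.2) :=
          Finset.sum_le_sum fun p _ => mul_le_mul_of_nonneg_left (ih (b p.2)) (hn p.1)
        have hsum2eq : ∑ p ∈ Finset.univ.filter (fun p : Fin d × Fin d => p.1 ≠ p.2), n p.1 * g p.2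
            = CatAux.Bc d (t+2) * ((∑ i, n i) * (∑ i, n i ^ (t+2)) - (∑ i, n i ^ (t+3)))
              - CatAux.Ec (t+2) * ((∑ i, n i) * (∑ i, n i ^ (t+1)) - (∑ i, n i ^ (t+2))) := by
          rw [CatAux.sum_offdiag_mul n g]
          have e1 : ∑ j, g j = CatAux.Bc d (t+2) * (∑ i, n i ^ (t+2))
              - CatAux.Ec (t+2) * (∑ i, n i ^ (t+1)) := by
            simp only [hg]
            rw [Finset.sum_sub_distrib, ← Finset.mul_sum, ← Finset.mul_sum]
          have e2 : ∑ i, n i * g i = CatAux.Bc d (t+2) * (∑ i, n i ^ (t+3))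
              - CatAux.Ec (t+2) * (∑ i, n i ^ (t+2)) := by
            have hterm : ∀ i : Fin d, n i * g i
                = (CatAux.Bc d (t+2) * n i ^ (t+3) - CatAux.Ec (t+2) * n i ^ (t+2)) := fun i => by
              simp only [hg]; ring
            rw [Finset.sum_congr rfl fun i _ => hterm i, Finset.sum_sub_distrib,
              ← Finset.mul_sum, ← Finset.mul_sum]
          rw [e1, e2]
          ring
        have hkeyB : CatAux.Bc d (t+3) * (∑ i, n i) ^ (t+3)
            ≤ CatAux.Bc d (t+3) * (∑ i, n i ^ (t+3))
              + CatAux.Bc d (t+2) * ((∑ i, n i) * (∑ i, n i ^ (t+2)) - (∑ i, n i ^ (t+3))) := by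
          have hB : (∑ i, n i) ^ (t+3) ≤ (∑ i, n i ^ (t+3))
              + (∑ u ∈ Finset.range (t+2), (d:ℝ)^u)
                * ((∑ i, n i) * (∑ i, n i ^ (t+2)) - ∑ i, n i ^ (t+3)) :=
            CatAux.lemB n hn (t+1)
          have h := mul_le_mul_of_nonneg_left hB (CatAux.Bc_nonneg hd (t+3))
          have hgeom : CatAux.Bc d (t+3) * (∑ u ∈ Finset.range (t+2), (d:ℝ)^u)
              = CatAux.Bc d (t+2) := CatAux.Bc_geom hd (t+1)
          calc CatAux.Bc d (t+3) * (∑ i, n i)^(t+3) ≤ _ := h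
          _ = CatAux.Bc d (t+3) * (∑ i, n i ^ (t+3))
              + (CatAux.Bc d (t+3) * (∑ u ∈ Finset.range (t+2), (d:ℝ)^u))
                * ((∑ i, n i) * (∑ i, n i ^ (t+2)) - (∑ i, n i ^ (t+3))) := by ring
          _ = _ := by rw [hgeom]
        have herr := CatAux.errE n hn t
        have H : CatAux.Bc d (t+3) * (((StrictDaryTree.node b).leaves : ℕ) : ℝ)^(t+3)
            - CatAux.Ec (t+3) * (((StrictDaryTree.node b).leaves : ℕ) : ℝ)^(t+2)
            ≤ c (t+3) (StrictDaryTree.node b) := by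
          rw [hrec3, hLS]
          linarith [hsum1, hsum2, hsum2eq, hkeyB, herr]
        exact H
  intro T
  rw [ge_iff_le]
  obtain ⟨t, rfl⟩ : ∃ t, k = t + 2 := ⟨k - 2, by omega⟩
  have h := main t T
  have e : t+2-1 = t+1 := by omega
  have hEk : CatAux.Ec (t+2) = ((t+1).factorial : ℝ)⁻¹ := by
    simp only [CatAux.Ec, e]
    rw [if_neg (show ¬ t+2 = 2 by omega)]
  have hBk : (1 / 2 : ℝ) * ((d : ℝ) - 1) ^ (t+2 - 1) *
          ∏ j ∈ Finset.Icc 1 (t+2 - 1), ((d : ℝ) ^ j - 1)⁻¹ = CatAux.Bc d (t+2) := rfl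
  rw [hBk, e]
  have hdiv : (T.leaves:ℝ)^(t+1) / ((t+1).factorial : ℝ)
      = CatAux.Ec (t+2) * (T.leaves:ℝ)^(t+1) := by
    rw [hEk]; ring
  rw [hdiv]
  exact h
end

section
/- For integers d ≥ 2, k ≥ 3, and positive reals α_1,...,α_d with ∑α_i = 1, setting b_k = (1/2)·(d-1)^{k-1}·∏_{j=1}^{k-1}(d^j-1)^{-1}, one has b_k ≤ b_{k-1} · (∑_{i≠j} α_i·α_j^{k-1}) / (1 − ∑_{i=1}^d α_i^k). -/
open Finset

lemma geomB (x y : ℝ) (hx : 0 ≤ x) (hy : 0 ≤ y) (hxy : x + y ≤ 1) (n : ℕ) (hn : 1 ≤ n) :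
    ∑ i ∈ Finset.range (n+1), x^i * y^(n-i) ≤ ∑ i ∈ Finset.range n, x^i * y^(n-1-i) := by
  set A := ∑ i ∈ Finset.range n, x^i * y^(n-1-i) with hA
  have hA0 : 0 ≤ A := Finset.sum_nonneg fun i _ => by positivity
  have hterm : y^(n-1) ≤ A := by
    have h0 : (0:ℕ) ∈ Finset.range n := Finset.mem_range.mpr hn
    have := Finset.single_le_sum (f := fun i => x^i * y^(n-1-i))
      (fun i _ => by positivity) h0
    simpa using this
  have hsplit : ∑ i ∈ Finset.range (n+1), x^i * y^(n-i) = x * A + y^n := by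
    rw [Finset.sum_range_succ']
    simp only [pow_zero, one_mul, Nat.sub_zero, hA, Finset.mul_sum]
    congr 1
    apply Finset.sum_congr rfl
    intro i _
    have : n - (i+1) = n - 1 - i := by omega
    rw [this, pow_succ]
    ring
  rw [hsplit]
  have hyn : y^n = y * y^(n-1) := by
    conv_lhs => rw [show n = 1 + (n-1) by omega, pow_add, pow_one]
  calc x * A + y^n ≤ x * A + y * A := by
        rw [hyn]; exact add_le_add le_rfl (mul_le_mul_of_nonneg_left hterm hy)
    _ = (x + y) * A := by ring
    _ ≤ 1 * A := mul_le_mul_of_nonneg_right hxy hA0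
    _ = A := one_mul A

lemma pairwise_key (x y : ℝ) (hx : 0 ≤ x) (hy : 0 ≤ y) (hxy : x + y ≤ 1) (n : ℕ) (hn : 1 ≤ n) :
    0 ≤ (x - y) * ((x^n - x^(n+1)) - (y^n - y^(n+1))) := by
  have h1 : x^n - y^n = (∑ i ∈ Finset.range n, x^i * y^(n-1-i)) * (x - y) :=
    (geom_sum₂_mul x y n).symm
  have h2 : x^(n+1) - y^(n+1) = (∑ i ∈ Finset.range (n+1), x^i * y^(n-i)) * (x - y) := by
    have := (geom_sum₂_mul x y (n+1)).symm
    simpa using this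
  have hkey : (x - y) * ((x^n - x^(n+1)) - (y^n - y^(n+1)))
      = ((∑ i ∈ Finset.range n, x^i * y^(n-1-i)) - ∑ i ∈ Finset.range (n+1), x^i * y^(n-i)) * (x - y)^2 := by
    have : (x^n - x^(n+1)) - (y^n - y^(n+1)) = (x^n - y^n) - (x^(n+1) - y^(n+1)) := by ring
    rw [this, h1, h2]; ring
  rw [hkey]
  exact mul_nonneg (sub_nonneg.mpr (geomB x y hx hy hxy n hn)) (sq_nonneg _)

lemma pair_le (d : ℕ) (α : Fin d → ℝ) (hα : ∀ i, 0 < α i) (hsum : ∑ i, α i = 1)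
    {i j : Fin d} (hij : i ≠ j) : α i + α j ≤ 1 := by
  have hsub : ({i, j} : Finset (Fin d)) ⊆ Finset.univ := Finset.subset_univ _
  have := Finset.sum_le_sum_of_subset_of_nonneg hsub
    (fun x _ _ => (hα x).le)
  rw [Finset.sum_pair hij] at this
  linarith [hsum ▸ this]

lemma claimA (d : ℕ) (α : Fin d → ℝ) (hα : ∀ i, 0 < α i) (hsum : ∑ i, α i = 1)
    (n : ℕ) (hn : 1 ≤ n) :
    (∑ i, α i ^ n) - (∑ i, α i ^ (n+1)) ≤ (d : ℝ) * ((∑ i, α i ^ (n+1)) - ∑ i, α i ^ (n+2)) := by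
  set E := ∑ i, ∑ j, (α i - α j) * (α i ^ n - α i ^ (n+1)) with hE
  have hdα : ∀ i, (d:ℝ) * α i - 1 = ∑ j, (α i - α j) := by
    intro i
    rw [Finset.sum_sub_distrib, hsum, Finset.sum_const, Finset.card_univ, Fintype.card_fin,
      nsmul_eq_mul]
  have hEeq : E = (d : ℝ) * ((∑ i, α i ^ (n+1)) - ∑ i, α i ^ (n+2))
      - ((∑ i, α i ^ n) - (∑ i, α i ^ (n+1))) := by
    have : ∀ i, ∑ j, (α i - α j) * (α i ^ n - α i ^ (n+1))
        = ((d:ℝ) * α i - 1) * (α i ^ n - α i ^ (n+1)) := by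
      intro i
      rw [hdα i, ← Finset.sum_mul]
    rw [hE]
    simp_rw [this]
    have h3 : ∀ i : Fin d, ((d:ℝ) * α i - 1) * (α i ^ n - α i ^ (n+1))
        = ((d:ℝ) * (α i ^ (n+1) - α i ^ (n+2)) - (α i ^ n - α i ^ (n+1))) := by
      intro i
      rw [pow_succ, pow_succ, pow_succ]
      ring
    simp_rw [h3]
    rw [Finset.sum_sub_distrib, ← Finset.mul_sum, Finset.sum_sub_distrib, Finset.sum_sub_distrib]
  have hswap : E = ∑ i, ∑ j, (α j - α i) * (α j ^ n - α j ^ (n+1)) := by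
    rw [hE, Finset.sum_comm]
  have h2E : 2 * E = ∑ i, ∑ j, (α i - α j) * ((α i ^ n - α i ^ (n+1)) - (α j ^ n - α j ^ (n+1))) := by
    nth_rewrite 1 [two_mul]
    nth_rewrite 2 [hswap]
    rw [hE, ← Finset.sum_add_distrib]
    apply Finset.sum_congr rfl
    intro i _
    rw [← Finset.sum_add_distrib]
    apply Finset.sum_congr rfl
    intro j _
    ring
  have hpos : 0 ≤ 2 * E := by
    rw [h2E]
    apply Finset.sum_nonneg
    intro i _
    apply Finset.sum_nonneg
    intro j _
    rcases eq_or_ne i j with rfl | hij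
    · simp
    · exact pairwise_key (α i) (α j) (hα i).le (hα j).le (pair_le d α hα hsum hij) n hn
  linarith [hEeq ▸ hpos]

lemma keyP (d : ℕ) (hd : 2 ≤ d) (α : Fin d → ℝ) (hα : ∀ i, 0 < α i) (hsum : ∑ i, α i = 1)
    (n : ℕ) (hn : 1 ≤ n) :
    ((d:ℝ) - 1) / ((d:ℝ)^n - 1) * (1 - ∑ i, α i ^ (n+1)) ≤ (∑ i, α i ^ n) - ∑ i, α i ^ (n+1) := by
  have hd1 : (1:ℝ) < (d:ℝ) := by exact_mod_cast hd.trans_lt' one_lt_two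
  induction n, hn using Nat.le_induction with
  | base =>
    have hS1 : ∑ i, α i ^ 1 = 1 := by simpa using hsum
    rw [hS1, pow_one]
    rw [div_self (by linarith), one_mul]
  | succ n hn ih =>
    have hpow : ∀ m : ℕ, 1 ≤ m → (0:ℝ) < (d:ℝ)^m - 1 := by
      intro m hm
      have : (1:ℝ) < (d:ℝ)^m := one_lt_pow₀ hd1 (by omega)
      linarith
    have hdn := hpow n hn
    have hdn1 := hpow (n+1) (by omega)
    set c := ((d:ℝ) - 1) / ((d:ℝ)^n - 1) with hc
    have hc0 : 0 < c := div_pos (by linarith) hdn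
    have hA := claimA d α hα hsum n hn
    set Y := (∑ i, α i ^ (n+1)) - ∑ i, α i ^ (n+2) with hY
    have hstep : c * (1 - ∑ i, α i ^ (n+2)) ≤ ((d:ℝ) + c) * Y := by
      have h1 : c * (1 - ∑ i, α i ^ (n+2)) = c * (1 - ∑ i, α i ^ (n+1)) + c * Y := by
        rw [hY]; ring
      have h2 : c * (1 - ∑ i, α i ^ (n+1)) ≤ (∑ i, α i ^ n) - ∑ i, α i ^ (n+1) := ih
      nlinarith [hA]
    have hdc : (0:ℝ) < (d:ℝ) + c := by linarith
    have hmul : ((d:ℝ)-1) * ((d:ℝ)+c) = c * ((d:ℝ)^(n+1)-1) := by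
      rw [hc]
      field_simp
      rw [pow_succ]
      ring
    have hcc : ((d:ℝ) - 1) / ((d:ℝ)^(n+1) - 1) = c / ((d:ℝ) + c) :=
      (div_eq_div_iff hdn1.ne' hdc.ne').mpr hmul
    rw [hcc, div_mul_eq_mul_div, div_le_iff₀ hdc]
    calc c * (1 - ∑ i, α i ^ (n+1+1)) ≤ ((d:ℝ) + c) * Y := hstep
      _ = Y * ((d:ℝ) + c) := by ring

theorem b_ratio_ineq (d k : ℕ) (hd : 2 ≤ d) (hk : 3 ≤ k)
    (α : Fin d → ℝ) (hα : ∀ i, 0 < α i) (hsum : ∑ i, α i = 1) :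
    (1 / 2 : ℝ) * ((d : ℝ) - 1) ^ (k - 1) * ∏ j ∈ Finset.Icc 1 (k - 1), ((d : ℝ) ^ j - 1)⁻¹
      ≤ ((1 / 2 : ℝ) * ((d : ℝ) - 1) ^ (k - 2) *
          ∏ j ∈ Finset.Icc 1 (k - 2), ((d : ℝ) ^ j - 1)⁻¹) *
        ((∑ p ∈ Finset.univ.filter (fun p : Fin d × Fin d => p.1 ≠ p.2),
            α p.1 * α p.2 ^ (k - 1)) / (1 - ∑ i, α i ^ k)) := by
  obtain ⟨n, rfl⟩ : ∃ n, k = n + 3 := ⟨k - 3, by omega⟩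
  have e1 : n + 3 - 1 = n + 2 := rfl
  have e2 : n + 3 - 2 = n + 1 := rfl
  rw [e1, e2]
  have hd1 : (1:ℝ) < (d:ℝ) := by exact_mod_cast hd.trans_lt' one_lt_two
  -- filter sum identity
  have htot : ∑ p : Fin d × Fin d, α p.1 * α p.2 ^ (n+2) = ∑ i, α i ^ (n+2) := by
    rw [Fintype.sum_prod_type]
    simp_rw [← Finset.mul_sum]
    rw [← Finset.sum_mul, hsum, one_mul]
  have hdiag : ∑ p ∈ Finset.univ.filter (fun p : Fin d × Fin d => p.1 = p.2),
      α p.1 * α p.2 ^ (n+2) = ∑ i, α i ^ (n+3) := by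
    rw [Finset.sum_filter, Fintype.sum_prod_type]
    simp [Finset.sum_ite_eq, pow_succ, mul_comm]
  have hfilter : ∑ p ∈ Finset.univ.filter (fun p : Fin d × Fin d => p.1 ≠ p.2),
      α p.1 * α p.2 ^ (n+2) = (∑ i, α i ^ (n+2)) - ∑ i, α i ^ (n+3) := by
    have hsplit := Finset.sum_filter_add_sum_filter_not Finset.univ
      (fun p : Fin d × Fin d => p.1 = p.2) (fun p => α p.1 * α p.2 ^ (n+2))
    have : (Finset.univ.filter (fun p : Fin d × Fin d => p.1 ≠ p.2))
        = (Finset.univ.filter (fun p : Fin d × Fin d => ¬ p.1 = p.2)) := by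
      simp [ne_eq]
    rw [this]
    rw [htot, hdiag] at hsplit
    linarith
  -- strict bound on the k-th power sum
  have hlt1 : ∀ i, α i < 1 := by
    intro i
    haveI : Nontrivial (Fin d) := Fin.nontrivial_iff_two_le.mpr hd
    obtain ⟨j, hj⟩ := exists_ne i
    have := pair_le d α hα hsum hj
    have := hα j
    linarith
  have hSk : ∑ i, α i ^ (n+3) < 1 := by
    haveI : Nonempty (Fin d) := ⟨⟨0, by omega⟩⟩
    have : ∑ i, α i ^ (n+3) < ∑ i, α i := by
      apply Finset.sum_lt_sum_of_nonempty
      · exact Finset.univ_nonempty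
      · intro i _
        have := pow_lt_pow_right_of_lt_one₀ (hα i) (hlt1 i) (show 1 < n + 3 by omega)
        simpa using this
    linarith [hsum ▸ this]
  have h1S : (0:ℝ) < 1 - ∑ i, α i ^ (n+3) := by linarith
  -- product split and positivity
  have hprod : ∏ j ∈ Finset.Icc 1 (n+2), ((d:ℝ)^j - 1)⁻¹
      = (∏ j ∈ Finset.Icc 1 (n+1), ((d:ℝ)^j - 1)⁻¹) * ((d:ℝ)^(n+2) - 1)⁻¹ :=
    Finset.prod_Icc_succ_top (by omega) _
  have hpow : ∀ m : ℕ, 1 ≤ m → (0:ℝ) < (d:ℝ)^m - 1 := by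
    intro m hm
    have : (1:ℝ) < (d:ℝ)^m := one_lt_pow₀ hd1 (by omega)
    linarith
  have hprodpos : 0 < ∏ j ∈ Finset.Icc 1 (n+1), ((d:ℝ)^j - 1)⁻¹ :=
    Finset.prod_pos fun j hj => inv_pos.mpr (hpow j (Finset.mem_Icc.mp hj).1)
  have hB : (0:ℝ) ≤ (1 / 2 : ℝ) * ((d : ℝ) - 1) ^ (n+1) *
      ∏ j ∈ Finset.Icc 1 (n+1), ((d : ℝ) ^ j - 1)⁻¹ := by
    have : (0:ℝ) ≤ ((d:ℝ) - 1) ^ (n+1) := pow_nonneg (by linarith) _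
    nlinarith [hprodpos]
  -- key inequality
  have key := keyP d hd α hα hsum (n+2) (by omega)
  have hratio : ((d:ℝ) - 1) / ((d:ℝ)^(n+2) - 1)
      ≤ ((∑ p ∈ Finset.univ.filter (fun p : Fin d × Fin d => p.1 ≠ p.2),
            α p.1 * α p.2 ^ (n+2)) / (1 - ∑ i, α i ^ (n+3))) := by
    rw [hfilter, le_div_iff₀ h1S]
    exact key
  have hLHS : (1 / 2 : ℝ) * ((d : ℝ) - 1) ^ (n+2) * ∏ j ∈ Finset.Icc 1 (n+2), ((d : ℝ) ^ j - 1)⁻¹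
      = ((1 / 2 : ℝ) * ((d : ℝ) - 1) ^ (n+1) * ∏ j ∈ Finset.Icc 1 (n+1), ((d : ℝ) ^ j - 1)⁻¹) *
        (((d:ℝ) - 1) / ((d:ℝ)^(n+2) - 1)) := by
    rw [hprod, pow_succ, div_eq_mul_inv]
    ring
  rw [hLHS]
  exact mul_le_mul_of_nonneg_left hratio hB
end
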